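/- arXiv:2604.11761 — 5 statements merged into one kernel-verified Lean document; each statement's English description precedes it below -/
import Mathlib

section
/- There exist absolute constants C₃, c₃ > 0 such that the following holds. Let n be an even positive integer and let M be an m×n random matrix, 1 ≤ m ≤ n, whose rows are independent, each uniformly distributed over the set of vectors in {-1,0,1}^n having exactly n/2 zero coordinates. Then for all t ≥ C₃, P( ‖M‖ ≥ t√n ) ≤ 2 exp(−c₃ t² n), where ‖M‖ = sup_{v ∈ S^{n-1}} ‖Mv‖₂ is the operator norm. -/
open MeasureTheory ProbabilityTheory Real

noncomputable section

/-- Euclidean norm of a finitely indexed real vector. -/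
def pnorm {ι : Type*} [Fintype ι] (x : ι → ℝ) : ℝ := Real.sqrt (∑ i, x i ^ 2)

/-- The set of "signed rows": vectors in `{-1,0,1}^n` with exactly `n/2` zero coordinates. -/
def signedRow (n : ℕ) : Set (Fin n → ℝ) :=
  {v | (∀ i, v i = -1 ∨ v i = 0 ∨ v i = 1) ∧ Nat.card {i : Fin n // v i = 0} = n / 2}

/-- The operator norm `‖M‖ = sup_{‖v‖₂ = 1} ‖Mv‖₂` of an `m × n` real matrix. -/
def opNorm {m n : ℕ} (M : Matrix (Fin m) (Fin n) ℝ) : ℝ :=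
  ⨆ v : {v : Fin n → ℝ // pnorm v = 1}, pnorm (M.mulVec v)


open Metric
open scoped ENNReal NNReal

section Aux

lemma pnorm_eq_norm {k : ℕ} (x : Fin k → ℝ) :
    pnorm x = ‖(WithLp.equiv 2 (Fin k → ℝ)).symm x‖ := by
  rw [pnorm, EuclideanSpace.norm_eq]
  simp [sq_abs]

lemma pnorm_nonneg {k : ℕ} (x : Fin k → ℝ) : 0 ≤ pnorm x := Real.sqrt_nonneg _

lemma pnorm_sub_triangle {k : ℕ} (x y z : Fin k → ℝ) :
    pnorm (x - z) ≤ pnorm (x - y) + pnorm (y - z) := by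
  simp only [pnorm_eq_norm]
  have : (WithLp.equiv 2 (Fin k → ℝ)).symm (x - z)
      = (WithLp.equiv 2 (Fin k → ℝ)).symm (x - y) + (WithLp.equiv 2 (Fin k → ℝ)).symm (y - z) := by
    simp [WithLp.equiv_symm_apply]

  rw [this]
  exact norm_add_le _ _

lemma pnorm_add_le {k : ℕ} (x y : Fin k → ℝ) : pnorm (x + y) ≤ pnorm x + pnorm y := by
  simp only [pnorm_eq_norm, WithLp.equiv_symm_apply, WithLp.toLp_add]
  exact norm_add_le _ _

lemma pnorm_smul {k : ℕ} (c : ℝ) (x : Fin k → ℝ) : pnorm (c • x) = |c| * pnorm x := by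
  simp only [pnorm_eq_norm, WithLp.equiv_symm_apply, WithLp.toLp_smul, norm_smul, Real.norm_eq_abs]

lemma sum_sq_of_pnorm_one {k : ℕ} {x : Fin k → ℝ} (h : pnorm x = 1) : ∑ i, x i ^ 2 = 1 := by
  have h0 : (0:ℝ) ≤ ∑ i, x i ^ 2 := Finset.sum_nonneg fun i _ => sq_nonneg _
  have := congrArg (fun t : ℝ => t ^ 2) h
  simpa [pnorm, Real.sq_sqrt h0] using this

lemma inner_le_pnorm_mul_pnorm {k : ℕ} (x y : Fin k → ℝ) :
    ∑ i, x i * y i ≤ pnorm x * pnorm y := by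
  have h := Finset.sum_mul_sq_le_sq_mul_sq Finset.univ x y
  have hx : 0 ≤ pnorm x * pnorm y := mul_nonneg (pnorm_nonneg _) (pnorm_nonneg _)
  have : (∑ i, x i * y i) ≤ |∑ i, x i * y i| := le_abs_self _
  refine this.trans ?_
  rw [← Real.sqrt_sq_eq_abs]
  refine Real.sqrt_le_sqrt h |>.trans ?_
  rw [pnorm, pnorm, ← Real.sqrt_mul (Finset.sum_nonneg fun i _ => sq_nonneg _)]


lemma sep_card_le {k : ℕ} (hk : 0 < k) (N : Finset (EuclideanSpace ℝ (Fin k)))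
    (h1 : ∀ x ∈ N, ‖x‖ = 1) (hsep : ∀ x ∈ N, ∀ y ∈ N, x ≠ y → 1/4 ≤ dist x y) :
    N.card ≤ 9 ^ k := by
  haveI : Nonempty (Fin k) := ⟨⟨0, hk⟩⟩
  haveI : Nontrivial (EuclideanSpace ℝ (Fin k)) := by
    have : Module.finrank ℝ (EuclideanSpace ℝ (Fin k)) = k := finrank_euclideanSpace_fin
    exact Module.nontrivial_of_finrank_pos (R := ℝ) (by omega)
  set μ : Measure (EuclideanSpace ℝ (Fin k)) := volume with hμ
  have hd : ∀ x ∈ N, ∀ y ∈ N, x ≠ y →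
      Disjoint (ball x (1/8)) (ball y (1/8)) := by
    intro x hx y hy hxy
    refine Set.disjoint_left.2 fun z hzx hzy => ?_
    have h1 : dist x y < 1/4 := by
      calc dist x y ≤ dist x z + dist z y := dist_triangle _ _ _
      _ < 1/8 + 1/8 := add_lt_add (by simpa [dist_comm] using mem_ball.1 hzx) (by simpa [dist_comm] using mem_ball.1 hzy)
      _ = 1/4 := by norm_num
    linarith [hsep x hx y hy hxy]
  have hUsub : (⋃ x ∈ N, ball x (1/8)) ⊆ ball (0 : EuclideanSpace ℝ (Fin k)) (9/8) := by
    refine Set.iUnion₂_subset fun x hx z hz => ?_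
    have hzx : dist z x < 1/8 := mem_ball.1 hz
    have hx1 : dist x (0 : EuclideanSpace ℝ (Fin k)) = 1 := by
      simpa [dist_zero_right] using h1 x hx
    have : dist z (0 : EuclideanSpace ℝ (Fin k)) < 9/8 := by
      calc dist z 0 ≤ dist z x + dist x 0 := dist_triangle _ _ _
      _ < 1/8 + 1 := by rw [hx1]; linarith
      _ = 9/8 := by norm_num
    exact mem_ball.2 this
  have hsum : ∑ x ∈ N, μ (ball x (1/8)) = μ (⋃ x ∈ N, ball x (1/8)) :=
    (measure_biUnion_finset (fun x hx y hy hxy => hd x hx y hy hxy)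
      fun x _ => measurableSet_ball).symm
  have hball : ∀ x : EuclideanSpace ℝ (Fin k),
      μ (ball x (1/8)) = ENNReal.ofReal ((1/8:ℝ) ^ k) * μ (ball 0 1) := by
    intro x
    rw [Measure.addHaar_ball μ x (by norm_num : (0:ℝ) ≤ 1/8), finrank_euclideanSpace_fin]
  have hbig : μ (ball (0:EuclideanSpace ℝ (Fin k)) (9/8))
      = ENNReal.ofReal ((9/8:ℝ) ^ k) * μ (ball 0 1) := by
    rw [Measure.addHaar_ball μ _ (by norm_num : (0:ℝ) ≤ 9/8), finrank_euclideanSpace_fin]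
  have hpos : μ (ball (0:EuclideanSpace ℝ (Fin k)) 1) ≠ 0 := (measure_ball_pos μ 0 one_pos).ne'
  have hfin : μ (ball (0:EuclideanSpace ℝ (Fin k)) 1) ≠ ⊤ := measure_ball_lt_top.ne
  have h2 : (N.card : ℝ≥0∞) * ENNReal.ofReal ((1/8:ℝ) ^ k) * μ (ball 0 1)
      ≤ ENNReal.ofReal ((9/8:ℝ) ^ k) * μ (ball 0 1) := by
    calc (N.card : ℝ≥0∞) * ENNReal.ofReal ((1/8:ℝ) ^ k) * μ (ball 0 1)
        = ∑ x ∈ N, μ (ball x (1/8)) := by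
          rw [Finset.sum_congr rfl fun x _ => hball x, Finset.sum_const, nsmul_eq_mul, mul_assoc]
    _ = μ (⋃ x ∈ N, ball x (1/8)) := hsum
    _ ≤ μ (ball (0:EuclideanSpace ℝ (Fin k)) (9/8)) := measure_mono hUsub
    _ = _ := hbig
  have key : (N.card : ℝ≥0∞) * ENNReal.ofReal ((1/8:ℝ) ^ k) ≤ ENNReal.ofReal ((9/8:ℝ) ^ k) :=
    (ENNReal.mul_le_mul_iff_left hpos hfin).1 h2
  have hr : (N.card : ℝ) * (1/8:ℝ)^k ≤ (9/8:ℝ)^k := by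
    have := ENNReal.toReal_mono ENNReal.ofReal_ne_top key
    rwa [ENNReal.toReal_mul, ENNReal.toReal_natCast,
      ENNReal.toReal_ofReal (by positivity), ENNReal.toReal_ofReal (by positivity)] at this
  have h8 : (0:ℝ) < (1/8:ℝ)^k := by positivity
  have h9 : (9/8:ℝ)^k = 9^k * (1/8:ℝ)^k := by
    rw [← mul_pow]; norm_num
  have : (N.card : ℝ) ≤ (9:ℝ)^k := by
    rw [h9] at hr
    exact le_of_mul_le_mul_right hr h8
  exact_mod_cast this


lemma exists_pnorm_net (k : ℕ) (hk : 0 < k) :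
    ∃ N : Finset (Fin k → ℝ), N.card ≤ 9 ^ k ∧ (∀ x ∈ N, pnorm x = 1) ∧
      ∀ v : Fin k → ℝ, pnorm v = 1 → ∃ x ∈ N, pnorm (v - x) ≤ 1/4 := by
  classical
  set Sep : Finset (EuclideanSpace ℝ (Fin k)) → Prop := fun N =>
    (∀ x ∈ N, ‖x‖ = 1) ∧ ∀ x ∈ N, ∀ y ∈ N, x ≠ y → 1/4 ≤ dist x y with hSep
  set S : Set ℕ := {c | ∃ N, Sep N ∧ N.card = c} with hS
  have hS0 : 0 ∈ S := ⟨∅, ⟨by simp, by simp⟩, rfl⟩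
  have hSbdd : BddAbove S := by
    refine ⟨9 ^ k, fun c hc => ?_⟩
    obtain ⟨N, hN, rfl⟩ := hc
    exact sep_card_le hk N hN.1 hN.2
  obtain ⟨N, hN, hcard⟩ : ∃ N, Sep N ∧ N.card = sSup S := Nat.sSup_mem ⟨0, hS0⟩ hSbdd
  have hnet : ∀ v : EuclideanSpace ℝ (Fin k), ‖v‖ = 1 → ∃ x ∈ N, dist v x ≤ 1/4 := by
    intro v hv
    by_contra h
    push_neg at h
    have hvN : v ∉ N := fun hm => by
      have := h v hm
      simp at this
      linarith
    have hSep' : Sep (insert v N) := by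
      constructor
      · intro x hx
        rcases Finset.mem_insert.1 hx with rfl | hx
        · exact hv
        · exact hN.1 x hx
      · intro x hx y hy hxy
        rcases Finset.mem_insert.1 hx with hx1 | hx2 <;>
          rcases Finset.mem_insert.1 hy with hy1 | hy2
        · exact absurd (hx1.trans hy1.symm) hxy
        · subst hx1; exact (h y hy2).le
        · subst hy1; rw [dist_comm]; exact (h x hx2).le
        · exact hN.2 x hx2 y hy2 hxy
    have : (insert v N).card ∈ S := ⟨_, hSep', rfl⟩
    have hle := le_csSup hSbdd this
    rw [Finset.card_insert_of_notMem hvN, hcard] at hle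
    omega
  refine ⟨N.image (WithLp.equiv 2 (Fin k → ℝ)), ?_, ?_, ?_⟩
  · exact (Finset.card_image_le).trans (hcard ▸ sep_card_le hk N hN.1 hN.2)
  · intro x hx
    obtain ⟨y, hy, rfl⟩ := Finset.mem_image.1 hx
    rw [pnorm_eq_norm]
    simpa using hN.1 y hy
  · intro v hv
    have hv' : ‖(WithLp.equiv 2 (Fin k → ℝ)).symm v‖ = 1 := by
      rw [← pnorm_eq_norm]; exact hv
    obtain ⟨x, hx, hdist⟩ := hnet _ hv'
    refine ⟨WithLp.equiv 2 (Fin k → ℝ) x, Finset.mem_image_of_mem _ hx, ?_⟩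
    rw [pnorm_eq_norm]
    have : (WithLp.equiv 2 (Fin k → ℝ)).symm (v - WithLp.equiv 2 (Fin k → ℝ) x)
        = (WithLp.equiv 2 (Fin k → ℝ)).symm v - x := by
      simp [WithLp.equiv_symm_apply]
    rw [this, ← dist_eq_norm]
    exact hdist


lemma pnorm_sq {k : ℕ} (x : Fin k → ℝ) : pnorm x ^ 2 = ∑ i, x i ^ 2 :=
  Real.sq_sqrt (Finset.sum_nonneg fun i _ => sq_nonneg _)

lemma pnorm_unit (k : ℕ) (hk : 0 < k) : pnorm (fun j : Fin k => if j = ⟨0, hk⟩ then (1:ℝ) else 0) = 1 := by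
  rw [pnorm]
  have : ∑ i : Fin k, (if i = ⟨0, hk⟩ then (1:ℝ) else 0) ^ 2 = 1 := by
    rw [Finset.sum_eq_single ⟨0, hk⟩]
    · simp
    · intro b _ hb; simp [hb]
    · simp
  rw [this, Real.sqrt_one]

lemma pnorm_mulVec_le {m n : ℕ} (M : Matrix (Fin m) (Fin n) ℝ) (x : Fin n → ℝ) :
    pnorm (M.mulVec x) ≤ Real.sqrt (∑ i, ∑ j, M i j ^ 2) * pnorm x := by
  rw [pnorm, pnorm, ← Real.sqrt_mul (show (0:ℝ) ≤ ∑ i, ∑ j, M i j ^ 2 from Finset.sum_nonneg fun i _ => Finset.sum_nonneg fun j _ => sq_nonneg _)]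
  apply Real.sqrt_le_sqrt
  rw [Finset.sum_mul]
  apply Finset.sum_le_sum
  intro i _
  have : M.mulVec x i = ∑ j, M i j * x j := rfl
  rw [this]
  exact Finset.sum_mul_sq_le_sq_mul_sq Finset.univ _ _

lemma opNorm_bddAbove {m n : ℕ} (M : Matrix (Fin m) (Fin n) ℝ) :
    BddAbove (Set.range fun v : {v : Fin n → ℝ // pnorm v = 1} => pnorm (M.mulVec v)) := by
  refine ⟨Real.sqrt (∑ i, ∑ j, M i j ^ 2), ?_⟩
  rintro y ⟨v, rfl⟩
  calc pnorm (M.mulVec v) ≤ Real.sqrt (∑ i, ∑ j, M i j ^ 2) * pnorm (v : Fin n → ℝ) :=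
        pnorm_mulVec_le M v
  _ = Real.sqrt (∑ i, ∑ j, M i j ^ 2) := by rw [v.2, mul_one]

lemma opNorm_nonneg {m n : ℕ} (hn : 0 < n) (M : Matrix (Fin m) (Fin n) ℝ) : 0 ≤ opNorm M := by
  have := le_ciSup (opNorm_bddAbove M) (⟨_, pnorm_unit n hn⟩ : {v : Fin n → ℝ // pnorm v = 1})
  exact le_trans (pnorm_nonneg _) this

lemma pnorm_mulVec_le_opNorm {m n : ℕ} (hn : 0 < n) (M : Matrix (Fin m) (Fin n) ℝ) (x : Fin n → ℝ) :
    pnorm (M.mulVec x) ≤ pnorm x * opNorm M := by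
  rcases eq_or_ne (pnorm x) 0 with h0 | h0
  · have hx : x = 0 := by
      have h1 : ∑ i, x i ^ 2 = 0 := by
        have := Real.sqrt_eq_zero (Finset.sum_nonneg fun i _ => sq_nonneg _) |>.1 h0
        exact this
      funext i
      have := (Finset.sum_eq_zero_iff_of_nonneg (fun i _ => sq_nonneg (x i))).1 h1 i (Finset.mem_univ i)
      exact pow_eq_zero_iff (n := 2) (by norm_num) |>.1 this
    subst hx
    rw [Matrix.mulVec_zero]
    have : pnorm (0 : Fin m → ℝ) = 0 := by simp [pnorm]
    rw [this, h0, zero_mul]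
  · have hpos : 0 < pnorm x := lt_of_le_of_ne (pnorm_nonneg x) (Ne.symm h0)
    set u : Fin n → ℝ := (pnorm x)⁻¹ • x with hu
    have hu1 : pnorm u = 1 := by
      rw [hu, pnorm_smul, abs_of_pos (inv_pos.2 hpos), inv_mul_cancel₀ h0]
    have hxu : x = pnorm x • u := by
      rw [hu, smul_smul, mul_inv_cancel₀ h0, one_smul]
    calc pnorm (M.mulVec x) = pnorm (M.mulVec (pnorm x • u)) := by rw [← hxu]
    _ = pnorm (pnorm x • M.mulVec u) := by rw [Matrix.mulVec_smul]
    _ = pnorm x * pnorm (M.mulVec u) := by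
        rw [pnorm_smul, abs_of_pos hpos]
    _ ≤ pnorm x * opNorm M := by
        apply mul_le_mul_of_nonneg_left _ hpos.le
        exact le_ciSup (opNorm_bddAbove M) (⟨u, hu1⟩ : {v : Fin n → ℝ // pnorm v = 1})

lemma opNorm_le_nets {m n : ℕ} (hm : 0 < m) (hn : 0 < n) (M : Matrix (Fin m) (Fin n) ℝ)
    (Nu : Finset (Fin m → ℝ)) (Nv : Finset (Fin n → ℝ))
    (hNu1 : ∀ u ∈ Nu, pnorm u = 1)
    (hNunet : ∀ u : Fin m → ℝ, pnorm u = 1 → ∃ u₀ ∈ Nu, pnorm (u - u₀) ≤ 1/4)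
    (hNv1 : ∀ v ∈ Nv, pnorm v = 1)
    (hNvnet : ∀ v : Fin n → ℝ, pnorm v = 1 → ∃ v₀ ∈ Nv, pnorm (v - v₀) ≤ 1/4)
    (K : ℝ) (hK : 0 ≤ K)
    (h : ∀ u₀ ∈ Nu, ∀ v₀ ∈ Nv, ∑ i, u₀ i * M.mulVec v₀ i ≤ K) :
    opNorm M ≤ (16/9) * K := by
  have step1 : ∀ v₀ ∈ Nv, pnorm (M.mulVec v₀) ≤ (4/3) * K := by
    intro v₀ hv₀
    set w := M.mulVec v₀ with hw
    rcases eq_or_ne (pnorm w) 0 with h0 | h0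
    · rw [h0]; positivity
    have hpos : 0 < pnorm w := lt_of_le_of_ne (pnorm_nonneg w) (Ne.symm h0)
    set u : Fin m → ℝ := (pnorm w)⁻¹ • w with hu
    have hu1 : pnorm u = 1 := by
      rw [hu, pnorm_smul, abs_of_pos (inv_pos.2 hpos), inv_mul_cancel₀ h0]
    obtain ⟨u₀, hu₀, hd⟩ := hNunet u hu1
    have huw : ∑ i, u i * w i = pnorm w := by
      rw [hu]
      have : ∀ i, ((pnorm w)⁻¹ • w) i * w i = (pnorm w)⁻¹ * (w i ^ 2) := by
        intro i; simp [Pi.smul_apply, smul_eq_mul]; ring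
      rw [Finset.sum_congr rfl fun i _ => this i, ← Finset.mul_sum, ← pnorm_sq w]
      field_simp
    have hsplit : ∑ i, u i * w i = ∑ i, u₀ i * w i + ∑ i, (u - u₀) i * w i := by
      rw [← Finset.sum_add_distrib]
      apply Finset.sum_congr rfl
      intro i _
      simp [Pi.sub_apply]
      ring
    have hbound : ∑ i, (u - u₀) i * w i ≤ (1/4) * pnorm w := by
      calc ∑ i, (u - u₀) i * w i ≤ pnorm (u - u₀) * pnorm w := inner_le_pnorm_mul_pnorm _ _
      _ ≤ (1/4) * pnorm w := mul_le_mul_of_nonneg_right hd (pnorm_nonneg w)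
    have hKb : ∑ i, u₀ i * w i ≤ K := h u₀ hu₀ v₀ hv₀
    have heq : pnorm w = ∑ i, u₀ i * w i + ∑ i, (u - u₀) i * w i := by
      rw [← hsplit, huw]
    linarith
  have hne : Nonempty {v : Fin n → ℝ // pnorm v = 1} := ⟨⟨_, pnorm_unit n hn⟩⟩
  have step3 : opNorm M ≤ (4/3) * K + (1/4) * opNorm M := by
    apply ciSup_le
    intro v
    obtain ⟨v₀, hv₀, hd⟩ := hNvnet v v.2
    have hsplit : M.mulVec (v : Fin n → ℝ) = M.mulVec v₀ + M.mulVec ((v : Fin n → ℝ) - v₀) := by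
      have hv : v₀ + ((v : Fin n → ℝ) - v₀) = (v : Fin n → ℝ) := by abel
      rw [← Matrix.mulVec_add, hv]
    calc pnorm (M.mulVec (v : Fin n → ℝ)) ≤ pnorm (M.mulVec v₀) + pnorm (M.mulVec ((v : Fin n → ℝ) - v₀)) := by
          rw [hsplit]; exact pnorm_add_le _ _
    _ ≤ (4/3) * K + (1/4) * opNorm M := by
        apply add_le_add (step1 v₀ hv₀)
        calc pnorm (M.mulVec ((v : Fin n → ℝ) - v₀)) ≤ pnorm ((v : Fin n → ℝ) - v₀) * opNorm M :=
              pnorm_mulVec_le_opNorm hn M _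
        _ ≤ (1/4) * opNorm M := mul_le_mul_of_nonneg_right hd (opNorm_nonneg hn M)
  have := opNorm_nonneg hn M
  rw [opNorm] at *
  linarith


lemma signedRow_finite (n : ℕ) : (signedRow n).Finite := by
  apply Set.Finite.subset (Set.Finite.pi (fun _ : Fin n => (Set.finite_singleton (-1:ℝ)).insert 0 |>.insert 1))
  intro x hx i _
  rcases hx.1 i with h | h | h <;> simp [h]

lemma flip_mem {n : ℕ} {x : Fin n → ℝ} (hx : x ∈ signedRow n) (j : Fin n) :
    Function.update x j (-(x j)) ∈ signedRow n := by
  constructor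
  · intro i
    rcases eq_or_ne i j with rfl | hij
    · rw [Function.update_self]
      rcases hx.1 i with h | h | h <;> simp [h]
    · rw [Function.update_of_ne hij]
      exact hx.1 i
  · have hiff : ∀ i, Function.update x j (-(x j)) i = 0 ↔ x i = 0 := by
      intro i
      rcases eq_or_ne i j with rfl | hij
      · rw [Function.update_self, neg_eq_zero]
      · rw [Function.update_of_ne hij]
    have := Nat.card_congr (Equiv.subtypeEquivRight hiff)
    rw [this]
    exact hx.2

lemma sum_prod_sign_zero {n : ℕ} {A : Finset (Fin n)} (hA : A.Nonempty) :
    ∑ x ∈ (signedRow_finite n).toFinset, ∏ j ∈ A, x j = 0 := by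
  classical
  obtain ⟨j₀, hj₀⟩ := hA
  apply Finset.sum_involution (fun x _ => Function.update x j₀ (-(x j₀)))
  · intro x hx
    have : ∏ j ∈ A, Function.update x j₀ (-(x j₀)) j = -∏ j ∈ A, x j := by
      rw [← Finset.mul_prod_erase A _ hj₀, ← Finset.mul_prod_erase A x hj₀,
        Function.update_self]
      have : ∏ j ∈ A.erase j₀, Function.update x j₀ (-(x j₀)) j = ∏ j ∈ A.erase j₀, x j := by
        apply Finset.prod_congr rfl
        intro j hj
        rw [Function.update_of_ne (Finset.ne_of_mem_erase hj)]
      rw [this]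
      ring
    rw [this]
    ring
  · intro x hx hne
    have hxj : x j₀ ≠ 0 := by
      intro h0
      apply hne
      rw [← Finset.mul_prod_erase A x hj₀, h0, zero_mul]
    intro heq
    have := congrFun heq j₀
    rw [Function.update_self] at this
    exact hxj (by linarith)
  · intro x hx
    funext i
    rcases eq_or_ne i j₀ with rfl | hij
    · simp
    · simp [Function.update_of_ne hij]
  · intro x hx
    rw [Set.Finite.mem_toFinset] at *
    exact flip_mem hx j₀

lemma key_sum {n : ℕ} (a : Fin n → ℝ) :
    ∑ x ∈ (signedRow_finite n).toFinset, Real.exp (∑ j, x j * a j)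
      ≤ ((signedRow_finite n).toFinset.card : ℝ) * Real.exp (∑ j, a j ^ 2 / 2) := by
  classical
  set F := (signedRow_finite n).toFinset with hF
  have step1 : ∀ x ∈ F, Real.exp (∑ j, x j * a j)
      ≤ ∏ j, (Real.cosh (a j) + x j * Real.sinh (a j)) := by
    intro x hx
    rw [Real.exp_sum]
    apply Finset.prod_le_prod (fun j _ => (Real.exp_pos _).le)
    intro j _
    have hxj := ((Set.Finite.mem_toFinset _).1 hx).1 j
    rcases hxj with h | h | h <;> rw [h]
    · rw [neg_one_mul]
      have h2 := Real.cosh_sub_sinh (a j)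
      have h3 : Real.exp (-(a j)) = Real.exp (-a j) := rfl
      linarith [h2.ge]
    · simpa using Real.one_le_cosh (a j)
    · simp only [one_mul]
      linarith [(Real.cosh_add_sinh (a j)).ge]
  have step2 : ∑ x ∈ F, ∏ j, (Real.cosh (a j) + x j * Real.sinh (a j))
      = (F.card : ℝ) * ∏ j : Fin n, Real.cosh (a j) := by
    have expand : ∀ x : Fin n → ℝ, ∏ j, (Real.cosh (a j) + x j * Real.sinh (a j))
        = ∑ A ∈ (Finset.univ : Finset (Fin n)).powerset,
            (∏ j ∈ A, (x j * Real.sinh (a j))) * ∏ j ∈ Finset.univ \ A, Real.cosh (a j) := by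
      intro x
      rw [← Finset.prod_add]
      apply Finset.prod_congr rfl
      intro j _
      ring
    rw [Finset.sum_congr rfl fun x _ => expand x, Finset.sum_comm]
    rw [Finset.sum_eq_single (∅ : Finset (Fin n))]
    · have : ∀ x ∈ F, (∏ j ∈ (∅ : Finset (Fin n)), (x j * Real.sinh (a j)))
          * ∏ j ∈ Finset.univ \ (∅ : Finset (Fin n)), Real.cosh (a j)
          = ∏ j, Real.cosh (a j) := by
        intro x _
        simp
      rw [Finset.sum_congr rfl this, Finset.sum_const, nsmul_eq_mul]
    · intro A hA hAne
      have hAne' : A.Nonempty := Finset.nonempty_iff_ne_empty.2 hAne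
      have : ∀ x ∈ F, (∏ j ∈ A, (x j * Real.sinh (a j))) * ∏ j ∈ Finset.univ \ A, Real.cosh (a j)
          = ((∏ j ∈ A, x j) * ((∏ j ∈ A, Real.sinh (a j)) * ∏ j ∈ Finset.univ \ A, Real.cosh (a j))) := by
        intro x _
        rw [Finset.prod_mul_distrib]
        ring
      rw [Finset.sum_congr rfl this, ← Finset.sum_mul, sum_prod_sign_zero hAne', zero_mul]
    · simp
  have step3 : (F.card : ℝ) * ∏ j : Fin n, Real.cosh (a j)
      ≤ (F.card : ℝ) * Real.exp (∑ j, a j ^ 2 / 2) := by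
    apply mul_le_mul_of_nonneg_left _ (Nat.cast_nonneg _)
    rw [Real.exp_sum]
    apply Finset.prod_le_prod (fun j _ => (Real.cosh_pos (a j)).le)
    intro j _
    exact Real.cosh_le_exp_half_sq (a j)
  calc ∑ x ∈ F, Real.exp (∑ j, x j * a j)
      ≤ ∑ x ∈ F, ∏ j, (Real.cosh (a j) + x j * Real.sinh (a j)) := Finset.sum_le_sum step1
  _ = (F.card : ℝ) * ∏ j : Fin n, Real.cosh (a j) := step2
  _ ≤ (F.card : ℝ) * Real.exp (∑ j, a j ^ 2 / 2) := step3


lemma uniformOn_eq_smul_sum {α : Type*} [MeasurableSpace α] [MeasurableSingletonClass α]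
    (F : Finset α) :
    uniformOn (↑F : Set α) = ((F.card : ℝ≥0∞))⁻¹ • ∑ x ∈ F, Measure.dirac x := by
  classical
  have hres : Measure.count.restrict (↑F : Set α) = ∑ x ∈ F, Measure.dirac x := by
    ext s hs
    rw [Measure.restrict_apply hs, Measure.finset_sum_apply]
    have hset : s ∩ ↑F = ↑(F.filter (· ∈ s)) := by
      ext z
      simp [and_comm]
    rw [hset, Measure.count_apply_finset]
    have : ∀ x ∈ F, Measure.dirac x s = if x ∈ s then (1:ℝ≥0∞) else 0 := by
      intro x _
      rw [Measure.dirac_apply' x hs]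
      simp [Set.indicator_apply]
    rw [Finset.sum_congr rfl this, Finset.sum_boole]
  unfold uniformOn ProbabilityTheory.cond
  rw [hres, Measure.count_apply_finset]

lemma integral_uniformOn_finset {α : Type*} [MeasurableSpace α] [MeasurableSingletonClass α]
    (F : Finset α) (f : α → ℝ) (hf : Measurable f) :
    ∫ x, f x ∂(uniformOn (↑F : Set α)) = (F.card : ℝ)⁻¹ * ∑ x ∈ F, f x := by
  rw [uniformOn_eq_smul_sum, integral_smul_measure,
    integral_finset_sum_measure (fun x _ => ?_), ENNReal.toReal_inv, ENNReal.toReal_natCast]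
  · rw [Finset.sum_congr rfl fun x _ => integral_dirac f x]
    rfl
  · refine ⟨hf.aestronglyMeasurable, ?_⟩
    rw [HasFiniteIntegral, lintegral_dirac]
    exact ENNReal.coe_lt_top

lemma integrable_uniformOn_finset {α : Type*} [MeasurableSpace α] [MeasurableSingletonClass α]
    (F : Finset α) (f : α → ℝ) (hf : Measurable f) :
    Integrable f (uniformOn (↑F : Set α)) := by
  rcases F.eq_empty_or_nonempty with rfl | hne
  · simp only [Finset.coe_empty, uniformOn_empty_meas]
    exact integrable_zero_measure
  rw [uniformOn_eq_smul_sum]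
  refine Integrable.smul_measure ?_ (ENNReal.inv_ne_top.2 (by exact_mod_cast hne.card_ne_zero))
  refine integrable_finset_sum_measure.2 fun x _ => ?_
  refine ⟨hf.aestronglyMeasurable, ?_⟩
  rw [HasFiniteIntegral, lintegral_dirac]
  exact ENNReal.coe_lt_top


lemma pair_bound {n m : ℕ} (hn : 0 < n) (hm : 0 < m)
    {Ω : Type} [MeasurableSpace Ω] (P : Measure Ω) [IsProbabilityMeasure P]
    (M : Ω → Matrix (Fin m) (Fin n) ℝ)
    (hMmeas : ∀ i, Measurable fun ω => M ω i)
    (h_indep : iIndepFun (fun i ω => M ω i) P)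
    (hdist : ∀ i, Measure.map (fun ω => M ω i) P = uniformOn (signedRow n))
    (u : Fin m → ℝ) (hu : pnorm u = 1) (v : Fin n → ℝ) (hv : pnorm v = 1)
    (s : ℝ) (hs : 0 ≤ s) :
    P {ω | s ≤ ∑ i, u i * (M ω).mulVec v i} ≤ ENNReal.ofReal (Real.exp (-(s^2)/2)) := by
  classical
  set F : Finset (Fin n → ℝ) := (signedRow_finite n).toFinset with hFdef
  have hFco : (↑F : Set (Fin n → ℝ)) = signedRow n := (signedRow_finite n).coe_toFinset
  -- nonemptiness of F
  have hSne : (signedRow n).Nonempty := by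
    by_contra h
    rw [Set.not_nonempty_iff_eq_empty] at h
    have h1 := hdist ⟨0, hm⟩
    have h2 : IsProbabilityMeasure (Measure.map (fun ω => M ω ⟨0, hm⟩) P) :=
      Measure.isProbabilityMeasure_map (hMmeas _).aemeasurable
    rw [h1, h, uniformOn_empty_meas] at h2
    have h3 : (0 : Measure Ω) Set.univ = 1 := h2.measure_univ
    rw [Measure.coe_zero, Pi.zero_apply] at h3
    exact zero_ne_one h3
  have hFne : F.Nonempty := (Set.Finite.toFinset_nonempty _).2 hSne
  have hcard : (0:ℝ) < (F.card : ℝ) := by exact_mod_cast hFne.card_pos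
  -- the summand functions
  set g : Fin m → (Fin n → ℝ) → ℝ := fun i x => u i * ∑ j, x j * v j with hgdef
  have hgmeas : ∀ i, Measurable (g i) := fun i =>
    (Finset.measurable_sum Finset.univ fun j _ => (by fun_prop : Measurable fun x : Fin n → ℝ => x j * v j)).const_mul (u i)
  set Y : Fin m → Ω → ℝ := fun i ω => g i (M ω i) with hYdef
  have hYmeas : ∀ i, Measurable (Y i) := fun i => (hgmeas i).comp (hMmeas i)
  have hYindep : iIndepFun Y P := h_indep.comp g hgmeas
  -- integrability of exponentials
  have hint : ∀ (θ : ℝ) (i : Fin m), Integrable (fun ω => Real.exp (θ * Y i ω)) P := by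
    intro θ i
    have hfm : Measurable fun x : Fin n → ℝ => Real.exp (θ * g i x) :=
      ((hgmeas i).const_mul θ).exp
    have : Integrable (fun x : Fin n → ℝ => Real.exp (θ * g i x))
        (Measure.map (fun ω => M ω i) P) := by
      rw [hdist i, ← hFco]
      exact integrable_uniformOn_finset F _ hfm
    exact (integrable_map_measure hfm.aestronglyMeasurable (hMmeas i).aemeasurable).1 this
  -- mgf bound for each row
  have hmgf : ∀ (θ : ℝ) (i : Fin m), mgf (Y i) P θ ≤ Real.exp ((θ * u i)^2 / 2) := by
    intro θ i
    have hfm : Measurable fun x : Fin n → ℝ => Real.exp (θ * g i x) :=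
      ((hgmeas i).const_mul θ).exp
    have h1 : mgf (Y i) P θ = ∫ x, Real.exp (θ * g i x) ∂(Measure.map (fun ω => M ω i) P) := by
      rw [mgf, integral_map (hMmeas i).aemeasurable hfm.aestronglyMeasurable]
    rw [h1, hdist i, ← hFco, integral_uniformOn_finset F _ hfm]
    set a : Fin n → ℝ := fun j => θ * u i * v j with hadef
    have hexp : ∀ x : Fin n → ℝ, θ * g i x = ∑ j, x j * a j := by
      intro x
      rw [hgdef, hadef]
      simp only []
      rw [Finset.mul_sum, Finset.mul_sum]
      apply Finset.sum_congr rfl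
      intro j _
      ring
    have h2 : ∑ x ∈ F, Real.exp (θ * g i x) ≤ (F.card : ℝ) * Real.exp (∑ j, a j ^ 2 / 2) := by
      rw [Finset.sum_congr rfl fun x _ => congrArg Real.exp (hexp x)]
      exact key_sum a
    have h3 : ∑ j, a j ^ 2 / 2 = (θ * u i)^2 / 2 := by
      have : ∀ j, a j ^ 2 / 2 = (θ * u i)^2 / 2 * v j ^ 2 := by
        intro j; rw [hadef]; simp only []; ring
      rw [Finset.sum_congr rfl fun j _ => this j, ← Finset.mul_sum, sum_sq_of_pnorm_one hv, mul_one]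
    calc (F.card : ℝ)⁻¹ * ∑ x ∈ F, Real.exp (θ * g i x)
        ≤ (F.card : ℝ)⁻¹ * ((F.card : ℝ) * Real.exp (∑ j, a j ^ 2 / 2)) := by
          apply mul_le_mul_of_nonneg_left h2 (by positivity)
    _ = Real.exp (∑ j, a j ^ 2 / 2) := by field_simp
    _ = Real.exp ((θ * u i)^2 / 2) := by rw [h3]
  -- sum of Y's
  have hset : {ω | s ≤ ∑ i, u i * (M ω).mulVec v i} = {ω | s ≤ (∑ i, Y i) ω} := by
    ext ω
    have hYi : ∀ i, Y i ω = u i * (M ω).mulVec v i := by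
      intro i
      simp only [hYdef, hgdef, Matrix.mulVec, dotProduct]
    simp [Finset.sum_apply, hYi]
  have hSint : Integrable (fun ω => Real.exp (s * (∑ i, Y i) ω)) P :=
    hYindep.integrable_exp_mul_sum hYmeas fun i _ => hint s i
  have hchern := measure_ge_le_exp_mul_mgf (X := ∑ i, Y i) (μ := P) (t := s) s hs hSint
  have hmgfS : mgf (∑ i, Y i) P s ≤ Real.exp (s^2 / 2) := by
    rw [hYindep.mgf_sum hYmeas Finset.univ]
    calc ∏ i, mgf (Y i) P s ≤ ∏ i, Real.exp ((s * u i)^2 / 2) :=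
          Finset.prod_le_prod (fun i _ => mgf_nonneg) (fun i _ => hmgf s i)
    _ = Real.exp (∑ i, (s * u i)^2 / 2) := by rw [Real.exp_sum]
    _ = Real.exp (s^2 / 2) := by
        congr 1
        have : ∀ i, (s * u i)^2 / 2 = s^2/2 * u i ^2 := by intro i; ring
        rw [Finset.sum_congr rfl fun i _ => this i, ← Finset.mul_sum, sum_sq_of_pnorm_one hu, mul_one]
  have hfinal : (P {ω | s ≤ (∑ i, Y i) ω}).toReal ≤ Real.exp (-(s^2)/2) := by
    calc (P {ω | s ≤ (∑ i, Y i) ω}).toReal ≤ Real.exp (-s * s) * mgf (∑ i, Y i) P s := hchern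
    _ ≤ Real.exp (-s * s) * Real.exp (s^2/2) := by
        apply mul_le_mul_of_nonneg_left hmgfS (Real.exp_nonneg _)
    _ = Real.exp (-(s^2)/2) := by
        rw [← Real.exp_add]
        congr 1
        ring
  rw [hset]
  exact (ENNReal.le_ofReal_iff_toReal_le (measure_ne_top P _) (Real.exp_nonneg _)).2 hfinal


end Aux

/-- there are absolute constants `C₃, c₃ > 0` such that for every even `n`,
every `m × n` random matrix `M` (`1 ≤ m ≤ n`) with independent rows uniform on the signed
rows, and every `t ≥ C₃`, `P(‖M‖ ≥ t √n) ≤ 2 exp(−c₃ t² n)`. -/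
theorem stmt5 :
    ∃ C₃ c₃ : ℝ, 0 < C₃ ∧ 0 < c₃ ∧
    ∀ n m : ℕ, 0 < n → Even n → 1 ≤ m → m ≤ n →
    ∀ (Ω : Type) (_ : MeasurableSpace Ω) (P : Measure Ω), IsProbabilityMeasure P →
    ∀ M : Ω → Matrix (Fin m) (Fin n) ℝ,
      (∀ i, Measurable fun ω => M ω i) →
      iIndepFun (fun i ω => M ω i) P →
      (∀ i, Measure.map (fun ω => M ω i) P = uniformOn (signedRow n)) →
    ∀ t : ℝ, C₃ ≤ t →
      P {ω | t * Real.sqrt n ≤ opNorm (M ω)} ≤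
        ENNReal.ofReal (2 * Real.exp (-c₃ * t ^ 2 * n)) := by
  classical
  refine ⟨100, 1/100, by norm_num, by norm_num, ?_⟩
  intro n m hn hneven hm hmn Ω mΩ P hP M hMmeas h_indep hdist t ht
  haveI := hP
  obtain ⟨Nu, hNucard, hNu1, hNunet⟩ := exists_pnorm_net m hm
  obtain ⟨Nv, hNvcard, hNv1, hNvnet⟩ := exists_pnorm_net n hn
  set s : ℝ := t * Real.sqrt n / 2 with hsdef
  have hnpos : (0:ℝ) < n := by exact_mod_cast hn
  have hsqrtpos : 0 < Real.sqrt n := Real.sqrt_pos.2 hnpos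
  have htpos : (0:ℝ) < t := lt_of_lt_of_le (by norm_num) ht
  have hspos : 0 < s := by rw [hsdef]; positivity
  have hincl : {ω | t * Real.sqrt n ≤ opNorm (M ω)} ⊆
      ⋃ u₀ ∈ Nu, ⋃ v₀ ∈ Nv, {ω | s ≤ ∑ i, u₀ i * (M ω).mulVec v₀ i} := by
    intro ω hω
    simp only [Set.mem_setOf_eq] at hω
    by_contra hc
    simp only [Set.mem_iUnion, Set.mem_setOf_eq, not_exists] at hc
    push_neg at hc
    have hK : ∀ u₀ ∈ Nu, ∀ v₀ ∈ Nv, ∑ i, u₀ i * (M ω).mulVec v₀ i ≤ s :=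
      fun u₀ hu₀ v₀ hv₀ => (hc u₀ hu₀ v₀ hv₀).le
    have hop := opNorm_le_nets hm hn (M ω) Nu Nv hNu1 hNunet hNv1 hNvnet s hspos.le hK
    have h2 : (16/9 : ℝ) * s < t * Real.sqrt n := by
      rw [hsdef]
      nlinarith [mul_pos htpos hsqrtpos]
    linarith
  have hpair : ∀ u₀ ∈ Nu, ∀ v₀ ∈ Nv,
      P {ω | s ≤ ∑ i, u₀ i * (M ω).mulVec v₀ i} ≤ ENNReal.ofReal (Real.exp (-(s^2)/2)) :=
    fun u₀ hu₀ v₀ hv₀ =>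
      pair_bound hn hm P M hMmeas h_indep hdist u₀ (hNu1 u₀ hu₀) v₀ (hNv1 v₀ hv₀) s hspos.le
  have hsum : P {ω | t * Real.sqrt n ≤ opNorm (M ω)}
      ≤ (Nu.card : ℝ≥0∞) * ((Nv.card : ℝ≥0∞) * ENNReal.ofReal (Real.exp (-(s^2)/2))) := by
    calc P {ω | t * Real.sqrt n ≤ opNorm (M ω)}
        ≤ P (⋃ u₀ ∈ Nu, ⋃ v₀ ∈ Nv, {ω | s ≤ ∑ i, u₀ i * (M ω).mulVec v₀ i}) :=
          measure_mono hincl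
    _ ≤ ∑ u₀ ∈ Nu, P (⋃ v₀ ∈ Nv, {ω | s ≤ ∑ i, u₀ i * (M ω).mulVec v₀ i}) :=
          measure_biUnion_finset_le _ _
    _ ≤ ∑ u₀ ∈ Nu, ∑ v₀ ∈ Nv, P {ω | s ≤ ∑ i, u₀ i * (M ω).mulVec v₀ i} :=
          Finset.sum_le_sum fun u₀ _ => measure_biUnion_finset_le _ _
    _ ≤ ∑ u₀ ∈ Nu, ∑ v₀ ∈ Nv, ENNReal.ofReal (Real.exp (-(s^2)/2)) :=
          Finset.sum_le_sum fun u₀ hu₀ => Finset.sum_le_sum fun v₀ hv₀ => hpair u₀ hu₀ v₀ hv₀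
    _ = (Nu.card : ℝ≥0∞) * ((Nv.card : ℝ≥0∞) * ENNReal.ofReal (Real.exp (-(s^2)/2))) := by
          rw [Finset.sum_const, Finset.sum_const, nsmul_eq_mul, nsmul_eq_mul]
  refine hsum.trans ?_
  have hreal : (Nu.card : ℝ) * ((Nv.card : ℝ) * Real.exp (-(s^2)/2))
      ≤ 2 * Real.exp (-(1/100) * t^2 * n) := by
    have hs2 : -(s^2)/2 = -(t^2 * n)/8 := by
      rw [hsdef]
      have : (t * Real.sqrt n / 2)^2 = t^2 * (Real.sqrt n)^2 / 4 := by ring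
      rw [this, Real.sq_sqrt (le_of_lt hnpos)]
      ring
    have hcu : (Nu.card : ℝ) ≤ (9:ℝ)^n := by
      have h1 : (Nu.card : ℝ) ≤ (9:ℝ)^m := by exact_mod_cast hNucard
      exact h1.trans (pow_le_pow_right₀ (by norm_num) hmn)
    have hcv : (Nv.card : ℝ) ≤ (9:ℝ)^n := by exact_mod_cast hNvcard
    have hexp_pos : 0 < Real.exp (-(s^2)/2) := Real.exp_pos _
    have hstep : (Nu.card : ℝ) * ((Nv.card : ℝ) * Real.exp (-(s^2)/2))
        ≤ (81:ℝ)^n * Real.exp (-(t^2*n)/8) := by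
      have h81 : (9:ℝ)^n * (9:ℝ)^n = (81:ℝ)^n := by
        rw [← mul_pow]; norm_num
      rw [hs2]
      calc (Nu.card : ℝ) * ((Nv.card : ℝ) * Real.exp (-(t^2*n)/8))
          ≤ (9:ℝ)^n * ((9:ℝ)^n * Real.exp (-(t^2*n)/8)) := by
            apply mul_le_mul hcu _ (by positivity) (by positivity)
            apply mul_le_mul_of_nonneg_right hcv (Real.exp_pos _).le
      _ = (81:ℝ)^n * Real.exp (-(t^2*n)/8) := by rw [← mul_assoc, h81]
    refine hstep.trans ?_
    have hlog : Real.log 81 ≤ 80 := by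
      have := Real.log_le_sub_one_of_pos (by norm_num : (0:ℝ) < 81)
      linarith
    have h81e : (81:ℝ)^n = Real.exp (n * Real.log 81) := by
      rw [← Real.exp_log (by norm_num : (0:ℝ) < 81), ← Real.exp_nat_mul, Real.exp_log (by norm_num : (0:ℝ) < 81)]
    have ht2 : (10000:ℝ) ≤ t^2 := by nlinarith
    have hn1 : (1:ℝ) ≤ n := by exact_mod_cast hn
    have harg : (n:ℝ) * Real.log 81 + (-(t^2*n)/8) ≤ -(1/100) * t^2 * n := by
      nlinarith [mul_le_mul_of_nonneg_right hlog (le_of_lt hnpos),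
        mul_le_mul_of_nonneg_right ht2 (le_of_lt hnpos)]
    calc (81:ℝ)^n * Real.exp (-(t^2*n)/8)
        = Real.exp ((n:ℝ) * Real.log 81 + (-(t^2*n)/8)) := by
          rw [h81e, ← Real.exp_add]
    _ ≤ Real.exp (-(1/100) * t^2 * n) := Real.exp_le_exp.2 harg
    _ ≤ 2 * Real.exp (-(1/100) * t^2 * n) := by nlinarith [Real.exp_pos (-(1/100) * t^2 * (n:ℝ))]
  calc (Nu.card : ℝ≥0∞) * ((Nv.card : ℝ≥0∞) * ENNReal.ofReal (Real.exp (-(s^2)/2)))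
      = ENNReal.ofReal ((Nu.card : ℝ) * ((Nv.card : ℝ) * Real.exp (-(s^2)/2))) := by
        rw [ENNReal.ofReal_mul (by positivity), ENNReal.ofReal_mul (by positivity),
          ENNReal.ofReal_natCast, ENNReal.ofReal_natCast]
  _ ≤ ENNReal.ofReal (2 * Real.exp (-(1/100) * t^2 * n)) := ENNReal.ofReal_le_ofReal hreal


end
end

section
/- There exists an absolute constant c₄ > 0 such that the following holds. Let n be an even positive integer and let M be an m×n random matrix, n/2 ≤ m ≤ n, whose rows are independent, each uniformly distributed over the set of vectors in {-1,0,1}^n having exactly n/2 zero coordinates. Then for any fixed v ∈ S^{n-1}, P( ‖Mv‖₂ ≤ √n/4 ) ≤ 2 e^{-c₄ n}. -/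
open MeasureTheory ProbabilityTheory Real
open Finset ENNReal

noncomputable section

def negFlip {n : ℕ} (i : Fin n) (x : Fin n → ℝ) : Fin n → ℝ := Function.update x i (-(x i))

lemma negFlip_apply_same {n} (i : Fin n) (x) : negFlip i x i = -(x i) := Function.update_self _ _ _
lemma negFlip_apply_ne {n} {i j : Fin n} (h : j ≠ i) (x) : negFlip i x j = x j := Function.update_of_ne h _ _

lemma negFlip_mem {n} {i : Fin n} {x} (hx : x ∈ signedRow n) : negFlip i x ∈ signedRow n := by
  obtain ⟨h1, h2⟩ := hx
  constructor
  · intro j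
    rcases eq_or_ne j i with rfl | hj
    · rw [negFlip_apply_same]
      rcases h1 j with h | h | h <;> simp [h]
    · rw [negFlip_apply_ne hj]; exact h1 j
  · rw [← h2]
    apply Nat.card_congr
    apply Equiv.subtypeEquivRight
    intro j
    rcases eq_or_ne j i with rfl | hj
    · rw [negFlip_apply_same]; simp
    · rw [negFlip_apply_ne hj]

lemma negFlip_negFlip {n} (i : Fin n) (x) : negFlip i (negFlip i x) = x := by
  funext j
  rcases eq_or_ne j i with rfl | hj
  · rw [negFlip_apply_same, negFlip_apply_same, neg_neg]
  · rw [negFlip_apply_ne hj, negFlip_apply_ne hj]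

section Comb
variable {n : ℕ}

lemma sum_negFlip_zero (hfin : (signedRow n).Finite) (i : Fin n) {f : (Fin n → ℝ) → ℝ}
    (hf : ∀ x ∈ signedRow n, f (negFlip i x) = - f x) : ∑ x ∈ hfin.toFinset, f x = 0 := by
  refine Finset.sum_involution (fun x _ => negFlip i x)
    (fun x hx => by rw [hf x (hfin.mem_toFinset.mp hx)]; ring) ?_
    (fun x hx => hfin.mem_toFinset.mpr (negFlip_mem (hfin.mem_toFinset.mp hx)))
    (fun x hx => negFlip_negFlip i x)
  intro x hx hfx heq
  apply hfx
  have heq' : negFlip i x = x := heq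
  have h2 := hf x (hfin.mem_toFinset.mp hx)
  rw [heq'] at h2
  linarith

lemma permute_mem {σ : Equiv.Perm (Fin n)} {x} (hx : x ∈ signedRow n) :
    (x ∘ σ) ∈ signedRow n := by
  obtain ⟨h1, h2⟩ := hx
  refine ⟨fun j => h1 (σ j), ?_⟩
  rw [← h2]
  exact Nat.card_congr (Equiv.subtypeEquiv σ (fun a => Iff.rfl))

lemma sum_comp_perm (hfin : (signedRow n).Finite) (σ : Equiv.Perm (Fin n))
    (f : (Fin n → ℝ) → ℝ) :
    ∑ x ∈ hfin.toFinset, f (x ∘ σ) = ∑ x ∈ hfin.toFinset, f x := by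
  refine Finset.sum_nbij' (fun x => x ∘ σ) (fun x => x ∘ σ.symm) ?_ ?_ ?_ ?_ ?_
  · intro a ha; exact hfin.mem_toFinset.mpr (permute_mem (hfin.mem_toFinset.mp ha))
  · intro a ha; exact hfin.mem_toFinset.mpr (permute_mem (hfin.mem_toFinset.mp ha))
  · intro a _; funext j; simp
  · intro a _; funext j; simp
  · intro a _; rfl

lemma row_sum_sq {x : Fin n → ℝ} (hn : Even n) (hx : x ∈ signedRow n) :
    ∑ j, (x j)^2 = (n : ℝ)/2 := by
  classical
  have h1 : ∀ j, (x j)^2 = if x j ≠ 0 then (1:ℝ) else 0 := by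
    intro j
    rcases hx.1 j with h | h | h <;> simp [h]
  have h0 : (univ.filter fun k => x k = 0).card = n / 2 := by
    rw [← hx.2, Nat.card_eq_fintype_card, Fintype.card_subtype]
  have htot : (univ.filter fun k => x k = 0).card + (univ.filter fun k => ¬ x k = 0).card = n := by
    rw [Finset.card_filter_add_card_filter_not]
    simp
  calc ∑ j, (x j)^2
      = ∑ j ∈ univ.filter (fun k => x k = 0), (x j)^2
        + ∑ j ∈ univ.filter (fun k => ¬ x k = 0), (x j)^2 :=
        (Finset.sum_filter_add_sum_filter_not univ _ _).symm
    _ = 0 + ((univ.filter fun k => ¬ x k = 0).card : ℝ) := by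
        congr 1
        · apply Finset.sum_eq_zero
          intro j hj
          have := (Finset.mem_filter.mp hj).2
          simp [this]
        · rw [Finset.sum_congr rfl (fun j hj => ?_), Finset.sum_const, nsmul_eq_mul, mul_one]
          have hj' := (Finset.mem_filter.mp hj).2
          rcases hx.1 j with h | h | h <;> simp [h] at hj' ⊢
    _ = (n : ℝ)/2 := by
        obtain ⟨k, rfl⟩ := hn
        have : (univ.filter fun j => ¬ x j = 0).card = k := by omega
        rw [this]; push_cast; ring

lemma sum_sq_coord (hn : Even n) (hfin : (signedRow n).Finite) (i : Fin n) :
    ∑ x ∈ hfin.toFinset, (x i)^2 = (hfin.toFinset.card : ℝ)/2 := by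
  have hn0 : 0 < n := Fin.pos i
  have hall : ∀ j : Fin n, ∑ x ∈ hfin.toFinset, (x j)^2 = ∑ x ∈ hfin.toFinset, (x i)^2 := by
    intro j
    have := sum_comp_perm hfin (Equiv.swap i j) (fun x => (x i)^2)
    simpa [Equiv.swap_apply_left] using this
  have key : (n : ℝ) * ∑ x ∈ hfin.toFinset, (x i)^2 = (hfin.toFinset.card : ℝ) * ((n:ℝ)/2) := by
    calc (n : ℝ) * ∑ x ∈ hfin.toFinset, (x i)^2
        = ∑ _j : Fin n, ∑ x ∈ hfin.toFinset, (x i)^2 := by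
          rw [Finset.sum_const, Finset.card_univ, Fintype.card_fin, nsmul_eq_mul]
      _ = ∑ j : Fin n, ∑ x ∈ hfin.toFinset, (x j)^2 := by
          exact Finset.sum_congr rfl fun j _ => (hall j).symm
      _ = ∑ x ∈ hfin.toFinset, ∑ j : Fin n, (x j)^2 := Finset.sum_comm
      _ = ∑ x ∈ hfin.toFinset, (n:ℝ)/2 := by
          refine Finset.sum_congr rfl fun x hx => row_sum_sq hn (hfin.mem_toFinset.mp hx)
      _ = (hfin.toFinset.card : ℝ) * ((n:ℝ)/2) := by rw [Finset.sum_const, nsmul_eq_mul]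
  have hne : (n : ℝ) ≠ 0 := Nat.cast_ne_zero.mpr hn0.ne'
  have key2 : (n:ℝ) * ((∑ x ∈ hfin.toFinset, (x i)^2) * 2) = (n:ℝ) * (hfin.toFinset.card : ℝ) := by
    linarith
  have := mul_left_cancel₀ hne key2
  linarith

end Comb

section Moments
variable {n : ℕ}

lemma sum_cross (hfin : (signedRow n).Finite) {i j : Fin n} (hij : i ≠ j) :
    ∑ x ∈ hfin.toFinset, x i * x j = 0 := by
  refine sum_negFlip_zero hfin i (fun x _ => ?_)
  rw [negFlip_apply_same, negFlip_apply_ne hij.symm]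
  ring

lemma sq_le_one {x : Fin n → ℝ} (hx : x ∈ signedRow n) (i : Fin n) : (x i)^2 ≤ 1 := by
  rcases hx.1 i with h | h | h <;> simp [h]

lemma sum_x2x2_le (hn : Even n) (hfin : (signedRow n).Finite) (i j : Fin n) :
    ∑ x ∈ hfin.toFinset, (x i)^2 * (x j)^2 ≤ (hfin.toFinset.card : ℝ)/2 := by
  calc ∑ x ∈ hfin.toFinset, (x i)^2 * (x j)^2
      ≤ ∑ x ∈ hfin.toFinset, (x i)^2 := by
        refine Finset.sum_le_sum fun x hx => ?_
        have h1 := sq_le_one (hfin.mem_toFinset.mp hx) j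
        nlinarith [sq_nonneg (x i)]
    _ = (hfin.toFinset.card : ℝ)/2 := sum_sq_coord hn hfin i

lemma sq_S (v x : Fin n → ℝ) :
    (∑ i, v i * x i)^2 = ∑ p ∈ univ ×ˢ univ, (v p.1 * x p.1) * (v p.2 * x p.2) := by
  rw [pow_two, Finset.sum_mul_sum, Finset.sum_product]

lemma M2 (hn : Even n) (hfin : (signedRow n).Finite) {v : Fin n → ℝ}
    (hv : ∑ i, (v i)^2 = 1) :
    ∑ x ∈ hfin.toFinset, (∑ i, v i * x i)^2 = (hfin.toFinset.card : ℝ)/2 := by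
  calc ∑ x ∈ hfin.toFinset, (∑ i, v i * x i)^2
      = ∑ x ∈ hfin.toFinset, ∑ p ∈ univ ×ˢ univ, (v p.1 * x p.1) * (v p.2 * x p.2) :=
        Finset.sum_congr rfl fun x _ => sq_S v x
    _ = ∑ p ∈ univ ×ˢ univ, ∑ x ∈ hfin.toFinset, (v p.1 * x p.1) * (v p.2 * x p.2) :=
        Finset.sum_comm
    _ = ∑ p ∈ univ ×ˢ univ, (v p.1 * v p.2) * ∑ x ∈ hfin.toFinset, x p.1 * x p.2 := by
        refine Finset.sum_congr rfl fun p _ => ?_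
        rw [Finset.mul_sum]
        exact Finset.sum_congr rfl fun x _ => by ring
    _ = (hfin.toFinset.card : ℝ)/2 := by
        rw [← Finset.diag_union_offDiag, Finset.sum_union (Finset.disjoint_diag_offDiag _),
          Finset.sum_diag]
        have h1 : ∑ i : Fin n, (v i * v i) * ∑ x ∈ hfin.toFinset, x i * x i
            = (hfin.toFinset.card : ℝ)/2 := by
          have : ∀ i : Fin n, (v i * v i) * (∑ x ∈ hfin.toFinset, x i * x i)
              = (v i)^2 * ((hfin.toFinset.card : ℝ)/2) := by
            intro i
            have h2 : ∑ x ∈ hfin.toFinset, x i * x i = ∑ x ∈ hfin.toFinset, (x i)^2 :=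
              Finset.sum_congr rfl fun x _ => (pow_two _).symm
            rw [h2, sum_sq_coord hn hfin i]; ring
          rw [Finset.sum_congr rfl fun i _ => this i, ← Finset.sum_mul, hv, one_mul]
        have h2 : ∑ p ∈ univ.offDiag, (v p.1 * v p.2) * ∑ x ∈ hfin.toFinset, x p.1 * x p.2 = 0 := by
          refine Finset.sum_eq_zero fun p hp => ?_
          rw [sum_cross hfin (Finset.mem_offDiag.mp hp).2.2, mul_zero]
        rw [h1, h2, add_zero]

def Qf {n : ℕ} (v x : Fin n → ℝ) : ℝ := ∑ k, (v k)^2 * (x k)^2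
def Rf {n : ℕ} (v x : Fin n → ℝ) : ℝ :=
  ∑ p ∈ (univ : Finset (Fin n)).offDiag, (v p.1 * x p.1) * (v p.2 * x p.2)

lemma sq_S_eq (v x : Fin n → ℝ) : (∑ i, v i * x i)^2 = Qf v x + Rf v x := by
  rw [sq_S, ← Finset.diag_union_offDiag, Finset.sum_union (Finset.disjoint_diag_offDiag _),
    Finset.sum_diag]
  congr 1
  exact Finset.sum_congr rfl fun i _ => by ring

lemma Qf_nonneg (v x : Fin n → ℝ) : 0 ≤ Qf v x :=
  Finset.sum_nonneg fun k _ => mul_nonneg (sq_nonneg _) (sq_nonneg _)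

lemma Qf_le_one {v x : Fin n → ℝ} (hv : ∑ i, (v i)^2 = 1) (hx : x ∈ signedRow n) :
    Qf v x ≤ 1 := by
  calc Qf v x ≤ ∑ k, (v k)^2 := by
        refine Finset.sum_le_sum fun k _ => ?_
        have := sq_le_one hx k
        nlinarith [sq_nonneg (v k)]
    _ = 1 := hv

lemma Qf_negFlip (v : Fin n → ℝ) (i : Fin n) (x : Fin n → ℝ) :
    Qf v (negFlip i x) = Qf v x := by
  refine Finset.sum_congr rfl fun k _ => ?_
  rcases eq_or_ne k i with rfl | hk
  · rw [negFlip_apply_same]; ring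
  · rw [negFlip_apply_ne hk]

lemma sum_Qf (hn : Even n) (hfin : (signedRow n).Finite) {v : Fin n → ℝ}
    (hv : ∑ i, (v i)^2 = 1) :
    ∑ x ∈ hfin.toFinset, Qf v x = (hfin.toFinset.card : ℝ)/2 := by
  unfold Qf
  rw [Finset.sum_comm]
  have : ∀ k : Fin n, ∑ x ∈ hfin.toFinset, (v k)^2 * (x k)^2
      = (v k)^2 * ((hfin.toFinset.card : ℝ)/2) := by
    intro k
    rw [← Finset.mul_sum, sum_sq_coord hn hfin k]
  rw [Finset.sum_congr rfl fun k _ => this k, ← Finset.sum_mul, hv, one_mul]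

lemma sum_Qf_sq_le (hn : Even n) (hfin : (signedRow n).Finite) {v : Fin n → ℝ}
    (hv : ∑ i, (v i)^2 = 1) :
    ∑ x ∈ hfin.toFinset, (Qf v x)^2 ≤ (hfin.toFinset.card : ℝ)/2 := by
  calc ∑ x ∈ hfin.toFinset, (Qf v x)^2 ≤ ∑ x ∈ hfin.toFinset, Qf v x := by
        refine Finset.sum_le_sum fun x hx => ?_
        have h1 := Qf_nonneg v x
        have h2 := Qf_le_one hv (hfin.mem_toFinset.mp hx)
        nlinarith
    _ = (hfin.toFinset.card : ℝ)/2 := sum_Qf hn hfin hv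

lemma sum_QR (hfin : (signedRow n).Finite) (v : Fin n → ℝ) :
    ∑ x ∈ hfin.toFinset, Qf v x * Rf v x = 0 := by
  have expand : ∀ x : Fin n → ℝ, Qf v x * Rf v x
      = ∑ p ∈ (univ : Finset (Fin n)).offDiag,
          Qf v x * ((v p.1 * x p.1) * (v p.2 * x p.2)) := by
    intro x; rw [Rf, Finset.mul_sum]
  rw [Finset.sum_congr rfl fun x _ => expand x, Finset.sum_comm]
  refine Finset.sum_eq_zero fun p hp => ?_
  have hne := (Finset.mem_offDiag.mp hp).2.2
  refine sum_negFlip_zero hfin p.1 (fun x hx => ?_)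
  rw [Qf_negFlip, negFlip_apply_same, negFlip_apply_ne hne.symm]
  ring

lemma T4_zero (hfin : (signedRow n).Finite) {i j k l : Fin n} (hij : i ≠ j) (hkl : k ≠ l)
    (h1 : ¬(k = i ∧ l = j)) (h2 : ¬(k = j ∧ l = i)) :
    ∑ x ∈ hfin.toFinset, x i * x j * (x k * x l) = 0 := by
  by_cases hki : k = i
  · subst hki
    have hlj : l ≠ j := fun h => h1 ⟨rfl, h⟩
    refine sum_negFlip_zero hfin j (fun x _ => ?_)
    rw [negFlip_apply_same, negFlip_apply_ne hij, negFlip_apply_ne hlj]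
    ring
  · by_cases hkj : k = j
    · subst hkj
      have hli : l ≠ i := fun h => h2 ⟨rfl, h⟩
      refine sum_negFlip_zero hfin i (fun x _ => ?_)
      rw [negFlip_apply_same, negFlip_apply_ne hij.symm, negFlip_apply_ne hli]
      ring
    · refine sum_negFlip_zero hfin k (fun x _ => ?_)
      rw [negFlip_apply_same, negFlip_apply_ne (fun h => hki h.symm : i ≠ k),
        negFlip_apply_ne (fun h => hkj h.symm : j ≠ k), negFlip_apply_ne hkl.symm]
      ring

lemma sum_R2_le (hn : Even n) (hfin : (signedRow n).Finite) {v : Fin n → ℝ}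
    (hv : ∑ i, (v i)^2 = 1) :
    ∑ x ∈ hfin.toFinset, (Rf v x)^2 ≤ (hfin.toFinset.card : ℝ) := by
  set N : ℝ := (hfin.toFinset.card : ℝ) with hN
  set OD := (univ : Finset (Fin n)).offDiag with hOD
  have expand : ∀ x : Fin n → ℝ, (Rf v x)^2
      = ∑ p ∈ OD, ∑ q ∈ OD,
          (v p.1 * v p.2 * v q.1 * v q.2) * (x p.1 * x p.2 * (x q.1 * x q.2)) := by
    intro x
    rw [pow_two, Rf, Finset.sum_mul_sum]
    exact Finset.sum_congr rfl fun p _ => Finset.sum_congr rfl fun q _ => by ring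
  have step1 : ∑ x ∈ hfin.toFinset, (Rf v x)^2
      = ∑ p ∈ OD, ∑ q ∈ OD, (v p.1 * v p.2 * v q.1 * v q.2)
          * ∑ x ∈ hfin.toFinset, x p.1 * x p.2 * (x q.1 * x q.2) := by
    rw [Finset.sum_congr rfl fun x _ => expand x, Finset.sum_comm]
    refine Finset.sum_congr rfl fun p _ => ?_
    rw [Finset.sum_comm]
    refine Finset.sum_congr rfl fun q _ => ?_
    rw [Finset.mul_sum]
  rw [step1]
  have inner_bound : ∀ p ∈ OD,
      ∑ q ∈ OD, (v p.1 * v p.2 * v q.1 * v q.2)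
          * ∑ x ∈ hfin.toFinset, x p.1 * x p.2 * (x q.1 * x q.2)
      ≤ (v p.1 * v p.2)^2 * N := by
    intro p hp
    obtain ⟨-, -, hp12⟩ := Finset.mem_offDiag.mp hp
    classical
    set f : Fin n × Fin n → ℝ := fun q => (v p.1 * v p.2 * v q.1 * v q.2)
        * ∑ x ∈ hfin.toFinset, x p.1 * x p.2 * (x q.1 * x q.2) with hf
    have hswap_mem : p.swap ∈ OD := by
      rw [Finset.mem_offDiag]
      exact ⟨Finset.mem_univ _, Finset.mem_univ _, Ne.symm hp12⟩
    have hsub : ({p, p.swap} : Finset (Fin n × Fin n)) ⊆ OD := by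
      intro q hq
      rcases Finset.mem_insert.mp hq with rfl | hq
      · exact hp
      · rw [Finset.mem_singleton.mp hq]; exact hswap_mem
    have hzero : ∀ q ∈ OD, q ∉ ({p, p.swap} : Finset (Fin n × Fin n)) → f q = 0 := by
      intro q hq hq'
      obtain ⟨-, -, hq12⟩ := Finset.mem_offDiag.mp hq
      have hqp : q ≠ p := fun h => hq' (by simp [h])
      have hqps : q ≠ p.swap := fun h => hq' (by simp [h])
      have hz : ∑ x ∈ hfin.toFinset, x p.1 * x p.2 * (x q.1 * x q.2) = 0 := by
        refine T4_zero hfin hp12 hq12 ?_ ?_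
        · intro ⟨ha, hb⟩; exact hqp (Prod.ext ha hb)
        · intro ⟨ha, hb⟩
          apply hqps
          apply Prod.ext <;> simp [Prod.fst_swap, Prod.snd_swap, ha, hb]
      rw [hf]; simp only [hz, mul_zero]
    have hps_ne : p ≠ p.swap := by
      intro h
      rw [Prod.ext_iff] at h
      exact hp12 (h.1.trans (Prod.fst_swap ▸ rfl))
    rw [← Finset.sum_subset hsub hzero, Finset.sum_pair hps_ne]
    have hb1 : f p ≤ (v p.1 * v p.2)^2 * (N/2) := by
      rw [hf]
      have h1 : ∑ x ∈ hfin.toFinset, x p.1 * x p.2 * (x p.1 * x p.2)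
          = ∑ x ∈ hfin.toFinset, (x p.1)^2 * (x p.2)^2 :=
        Finset.sum_congr rfl fun x _ => by ring
      simp only [h1]
      have h2 := sum_x2x2_le hn hfin p.1 p.2
      have h3 : v p.1 * v p.2 * v p.1 * v p.2 = (v p.1 * v p.2)^2 := by ring
      rw [h3]
      exact mul_le_mul_of_nonneg_left h2 (sq_nonneg _)
    have hb2 : f p.swap ≤ (v p.1 * v p.2)^2 * (N/2) := by
      rw [hf]
      have h1 : ∑ x ∈ hfin.toFinset, x p.1 * x p.2 * (x p.swap.1 * x p.swap.2)
          = ∑ x ∈ hfin.toFinset, (x p.1)^2 * (x p.2)^2 :=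
        Finset.sum_congr rfl fun x _ => by
          simp only [Prod.fst_swap, Prod.snd_swap]; ring
      simp only [h1]
      have h2 := sum_x2x2_le hn hfin p.1 p.2
      have h3 : v p.1 * v p.2 * v p.swap.1 * v p.swap.2 = (v p.1 * v p.2)^2 := by
        simp only [Prod.fst_swap, Prod.snd_swap]; ring
      rw [h3]
      exact mul_le_mul_of_nonneg_left h2 (sq_nonneg _)
    calc f p + f p.swap ≤ (v p.1 * v p.2)^2 * (N/2) + (v p.1 * v p.2)^2 * (N/2) :=
          add_le_add hb1 hb2
      _ = (v p.1 * v p.2)^2 * N := by ring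
  have hN0 : (0:ℝ) ≤ N := Nat.cast_nonneg _
  calc ∑ p ∈ OD, ∑ q ∈ OD, (v p.1 * v p.2 * v q.1 * v q.2)
          * ∑ x ∈ hfin.toFinset, x p.1 * x p.2 * (x q.1 * x q.2)
      ≤ ∑ p ∈ OD, (v p.1 * v p.2)^2 * N := Finset.sum_le_sum inner_bound
    _ ≤ ∑ p ∈ univ ×ˢ univ, (v p.1 * v p.2)^2 * N := by
        refine Finset.sum_le_sum_of_subset_of_nonneg ?_ (fun p _ _ => ?_)
        · intro p hp
          obtain ⟨h1, h2, -⟩ := Finset.mem_offDiag.mp hp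
          exact Finset.mem_product.mpr ⟨h1, h2⟩
        · exact mul_nonneg (sq_nonneg _) hN0
    _ = N := by
        rw [Finset.sum_product]
        have : ∀ i : Fin n, ∑ j : Fin n, (v i * v j)^2 * N = (v i)^2 * N := by
          intro i
          have h1 : ∀ j : Fin n, (v i * v j)^2 * N = (v i)^2 * N * (v j)^2 := fun j => by ring
          rw [Finset.sum_congr rfl fun j _ => h1 j, ← Finset.mul_sum, hv, mul_one]
        rw [Finset.sum_congr rfl fun i _ => this i, ← Finset.sum_mul, hv, one_mul]

lemma M4 (hn : Even n) (hfin : (signedRow n).Finite) {v : Fin n → ℝ}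
    (hv : ∑ i, (v i)^2 = 1) :
    ∑ x ∈ hfin.toFinset, ((∑ i, v i * x i)^2)^2 ≤ (3/2) * (hfin.toFinset.card : ℝ) := by
  have expand : ∀ x : Fin n → ℝ, ((∑ i, v i * x i)^2)^2
      = (Qf v x)^2 + 2 * (Qf v x * Rf v x) + (Rf v x)^2 := by
    intro x; rw [sq_S_eq]; ring
  rw [Finset.sum_congr rfl fun x _ => expand x]
  rw [Finset.sum_add_distrib, Finset.sum_add_distrib, ← Finset.mul_sum, sum_QR hfin v]
  have h1 := sum_Qf_sq_le hn hfin hv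
  have h2 := sum_R2_le hn hfin hv
  linarith

end Moments

section MeasureHelpers

lemma exp_neg_le {t : ℝ} (ht : 0 ≤ t) : Real.exp (-t) ≤ 1 - t + t^2 := by
  have h1 : Real.exp (-t) * (1 + t) ≤ 1 := by
    rw [Real.exp_neg]
    rw [inv_mul_le_iff₀ (Real.exp_pos t), mul_one]
    linarith [Real.add_one_le_exp t]
  have h2 : (0:ℝ) < 1 + t := by linarith
  nlinarith [Real.exp_pos (-t)]

lemma row_mgf {n : ℕ} (hn : Even n) (hfin : (signedRow n).Finite) {v : Fin n → ℝ}
    (hv : ∑ i, (v i)^2 = 1) :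
    ∑ x ∈ hfin.toFinset, Real.exp (-((∑ i, v i * x i)^2)/6)
      ≤ (23/24) * (hfin.toFinset.card : ℝ) := by
  have hpt : ∀ x : Fin n → ℝ, Real.exp (-((∑ i, v i * x i)^2)/6)
      ≤ 1 - (∑ i, v i * x i)^2/6 + ((∑ i, v i * x i)^2)^2/36 := by
    intro x
    have ht : 0 ≤ (∑ i, v i * x i)^2/6 := by positivity
    have := exp_neg_le ht
    calc Real.exp (-((∑ i, v i * x i)^2)/6)
        = Real.exp (-((∑ i, v i * x i)^2/6)) := by ring_nf
      _ ≤ 1 - (∑ i, v i * x i)^2/6 + ((∑ i, v i * x i)^2/6)^2 := this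
      _ ≤ 1 - (∑ i, v i * x i)^2/6 + ((∑ i, v i * x i)^2)^2/36 := by
          nlinarith [sq_nonneg ((∑ i, v i * x i)^2)]
  calc ∑ x ∈ hfin.toFinset, Real.exp (-((∑ i, v i * x i)^2)/6)
      ≤ ∑ x ∈ hfin.toFinset,
          (1 - (∑ i, v i * x i)^2/6 + ((∑ i, v i * x i)^2)^2/36) :=
        Finset.sum_le_sum fun x _ => hpt x
    _ ≤ (23/24) * (hfin.toFinset.card : ℝ) := by
        rw [Finset.sum_add_distrib, Finset.sum_sub_distrib, Finset.sum_const, nsmul_eq_mul,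
          mul_one]
        have hM2 : ∑ x ∈ hfin.toFinset, (∑ i, v i * x i)^2/6
            = ((hfin.toFinset.card : ℝ)/2)/6 := by
          rw [← Finset.sum_div, M2 hn hfin hv]
        have hM4 : ∑ x ∈ hfin.toFinset, ((∑ i, v i * x i)^2)^2/36
            ≤ ((3/2) * (hfin.toFinset.card : ℝ))/36 := by
          rw [← Finset.sum_div]
          exact div_le_div_of_nonneg_right (M4 hn hfin hv) (by norm_num) |>.trans_eq rfl
        rw [hM2]
        linarith

open MeasureTheory ENNReal in
lemma lintegral_uniformOn {α : Type*} [MeasurableSpace α] [MeasurableSingletonClass α]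
    {s : Set α} (hs : s.Finite) (f : α → ℝ≥0∞) :
    ∫⁻ a, f a ∂(uniformOn s)
      = (Measure.count s)⁻¹ * ∑ a ∈ hs.toFinset, f a := by
  rw [uniformOn, ProbabilityTheory.cond, lintegral_smul_measure]
  congr 1
  rw [← lintegral_indicator hs.measurableSet f, lintegral_count (s.indicator f)]
  have h2 : ∑ a ∈ hs.toFinset, f a = ∑ a ∈ hs.toFinset, s.indicator f a :=
    Finset.sum_congr rfl fun a ha => (Set.indicator_of_mem (hs.mem_toFinset.mp ha) f).symm
  rw [h2]
  exact tsum_eq_sum fun b hb =>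
    Set.indicator_of_notMem (fun h => hb (hs.mem_toFinset.mpr h)) f

end MeasureHelpers

open MeasureTheory ProbabilityTheory ENNReal in
lemma lintegral_prod_of_indep {Ω : Type} [MeasurableSpace Ω] {P : Measure Ω}
    [IsProbabilityMeasure P] {m : ℕ} {g : Fin m → Ω → ℝ≥0∞}
    (hmeas : ∀ i, Measurable (g i))
    (hind : iIndepFun g P) (s : Finset (Fin m)) :
    ∫⁻ ω, ∏ i ∈ s, g i ω ∂P = ∏ i ∈ s, ∫⁻ ω, g i ω ∂P := by
  classical
  induction s using Finset.induction with
  | empty => simp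
  | insert a s' ha ih =>
    rw [Finset.prod_insert ha]
    simp_rw [Finset.prod_insert ha]
    have hindep : IndepFun (g a) (∏ i ∈ s', g i) P :=
      (hind.indepFun_finset_prod_of_notMem hmeas ha).symm
    have hindep' : IndepFun (g a) (fun ω => ∏ i ∈ s', g i ω) P := by
      have he : (∏ i ∈ s', g i) = fun ω => ∏ i ∈ s', g i ω := by
        funext ω; exact Finset.prod_apply ω s' g
      rwa [he] at hindep
    have hprodmeas : Measurable (fun ω => ∏ i ∈ s', g i ω) :=
      Finset.measurable_prod s' fun i _ => hmeas i
    have := lintegral_mul_eq_lintegral_mul_lintegral_of_indepFun (hmeas a) hprodmeas hindep'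
    simp only [Pi.mul_apply] at this
    rw [this, ih]


open MeasureTheory ProbabilityTheory ENNReal in
lemma base_ineq : Real.exp (1/48) * (23/24) ≤ Real.exp (-(1/50)) := by
  have he := Real.exp_pos ((49:ℝ)/1200)
  have h1 : (1151:ℝ)/1200 < Real.exp (-(49/1200)) := by
    have := Real.add_one_lt_exp (x := -(49/1200)) (by norm_num)
    linarith
  rw [Real.exp_neg] at h1
  have h3 := mul_lt_mul_of_pos_left h1 he
  rw [mul_inv_cancel₀ he.ne'] at h3
  have h2 : Real.exp (49/1200) < 1200/1151 := by nlinarith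
  have key : Real.exp (49/1200) * (23/24) ≤ 1 := by nlinarith
  have hsplit : Real.exp (1/48) = Real.exp (49/1200) * Real.exp (-(1/50)) := by
    rw [← Real.exp_add]; norm_num
  rw [hsplit]
  calc Real.exp (49/1200) * Real.exp (-(1/50)) * (23/24)
      = (Real.exp (49/1200) * (23/24)) * Real.exp (-(1/50)) := by ring
    _ ≤ 1 * Real.exp (-(1/50)) :=
        mul_le_mul_of_nonneg_right key (Real.exp_nonneg _)
    _ = Real.exp (-(1/50)) := one_mul _

lemma numeric_ineq {n m : ℕ} (hneven : Even n) (hm1 : n / 2 ≤ m) :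
    Real.exp ((n:ℝ)/96) * (23/24)^m ≤ 2 * Real.exp (-(1/100) * n) := by
  obtain ⟨k, hk⟩ := hneven
  have hk2 : n / 2 = k := by omega
  have hkm : k ≤ m := by omega
  have h23 : ((23:ℝ)/24)^m ≤ (23/24)^k :=
    pow_le_pow_of_le_one (by norm_num) (by norm_num) hkm
  have e1 : Real.exp ((n:ℝ)/96) = Real.exp (1/48) ^ k := by
    rw [← Real.exp_nat_mul]
    congr 1
    subst hk; push_cast; ring
  have e2 : Real.exp (-(1/100) * (n:ℝ)) = Real.exp (-(1/50)) ^ k := by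
    rw [← Real.exp_nat_mul]
    congr 1
    subst hk; push_cast; ring
  calc Real.exp ((n:ℝ)/96) * (23/24)^m
      ≤ Real.exp ((n:ℝ)/96) * (23/24)^k :=
        mul_le_mul_of_nonneg_left h23 (Real.exp_nonneg _)
    _ = (Real.exp (1/48) * (23/24))^k := by rw [e1, mul_pow]
    _ ≤ Real.exp (-(1/50)) ^ k := by
        apply pow_le_pow_left₀ (by positivity) base_ineq
    _ = Real.exp (-(1/100) * n) := e2.symm
    _ ≤ 2 * Real.exp (-(1/100) * n) := by nlinarith [Real.exp_pos (-(1/100) * (n:ℝ))]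


/-- there is an absolute constant `c₄ > 0` such that for every even `n`,
every `m × n` random matrix `M` (`n/2 ≤ m ≤ n`) with independent rows uniform on the
signed rows, and every fixed unit vector `v`, `P(‖Mv‖₂ ≤ √n/4) ≤ 2 e^{−c₄ n}`. -/
theorem stmt6 :
    ∃ c₄ : ℝ, 0 < c₄ ∧
    ∀ n m : ℕ, 0 < n → Even n → n / 2 ≤ m → m ≤ n →
    ∀ (Ω : Type) (_ : MeasurableSpace Ω) (P : Measure Ω), IsProbabilityMeasure P →
    ∀ M : Ω → Matrix (Fin m) (Fin n) ℝ,
      (∀ i, Measurable fun ω => M ω i) →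
      iIndepFun (fun i ω => M ω i) P →
      (∀ i, Measure.map (fun ω => M ω i) P = uniformOn (signedRow n)) →
    ∀ v : Fin n → ℝ, pnorm v = 1 →
      P {ω | pnorm ((M ω).mulVec v) ≤ Real.sqrt n / 4} ≤
        ENNReal.ofReal (2 * Real.exp (-c₄ * n)) := by
  classical
  refine ⟨1/100, by norm_num, ?_⟩
  intro n m hn0 hneven hm1 hm2 Ω mΩ P hP M hMmeas hMindep hMmap v hv
  have hn2 : 2 ≤ n := by obtain ⟨k, rfl⟩ := hneven; omega
  have hm0 : 0 < m := by omega
  have hv1 : ∑ i, (v i)^2 = 1 := by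
    have h0 : (0:ℝ) ≤ ∑ i, (v i)^2 := Finset.sum_nonneg fun i _ => sq_nonneg _
    have h1 : Real.sqrt (∑ i, (v i)^2) = 1 := hv
    nlinarith [Real.sq_sqrt h0]
  set i0 : Fin m := ⟨0, hm0⟩
  haveI hprob : IsProbabilityMeasure (uniformOn (signedRow n)) := by
    rw [← hMmap i0]
    exact Measure.isProbabilityMeasure_map (hMmeas i0).aemeasurable
  have huniv : uniformOn (signedRow n) Set.univ = 1 := measure_univ
  have hfin : (signedRow n).Finite :=
    finite_of_uniformOn_ne_zero (t := Set.univ) (by rw [huniv]; exact one_ne_zero)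
  have hne : (signedRow n).Nonempty := by
    rcases Set.eq_empty_or_nonempty (signedRow n) with h | h
    · rw [h, uniformOn_empty_meas] at huniv; simp at huniv
    · exact h
  have hNpos : 0 < hfin.toFinset.card :=
    Finset.card_pos.mpr (hfin.toFinset_nonempty.mpr hne)
  -- row sums
  set S : Fin m → Ω → ℝ := fun i ω => ∑ j, v j * M ω i j with hS
  have hSmeas : ∀ i, Measurable (S i) := by
    intro i
    have h1 : Measurable (fun x : Fin n → ℝ => ∑ j, v j * x j) :=
      Finset.measurable_sum _ fun j _ => by fun_prop
    exact h1.comp (hMmeas i)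
  -- event rewrite
  have hEset : {ω | pnorm ((M ω).mulVec v) ≤ Real.sqrt n / 4}
      = {ω | ∑ i, (S i ω)^2 ≤ (n:ℝ)/16} := by
    ext ω
    simp only [Set.mem_setOf_eq, pnorm]
    have h4 : Real.sqrt (n:ℝ) / 4 = Real.sqrt ((n:ℝ)/16) := by
      rw [Real.sqrt_div (by positivity) 16,
        show Real.sqrt 16 = 4 by
          rw [show (16:ℝ) = 4^2 by norm_num, Real.sqrt_sq (by norm_num : (0:ℝ) ≤ 4)]]
    have h5 : ∀ i, ((M ω).mulVec v i)^2 = (S i ω)^2 := by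
      intro i
      have : (M ω).mulVec v i = S i ω := by
        simp only [Matrix.mulVec, dotProduct, hS]
        exact Finset.sum_congr rfl fun j _ => mul_comm _ _
      rw [this]
    rw [Finset.sum_congr rfl fun i _ => h5 i, h4,
      Real.sqrt_le_sqrt_iff (by positivity)]
  rw [hEset]
  set E := {ω | ∑ i, (S i ω)^2 ≤ (n:ℝ)/16} with hE
  have hsum_meas : Measurable fun ω => ∑ i, (S i ω)^2 :=
    Finset.measurable_sum _ fun i _ => ((hSmeas i).pow_const 2)
  have hEmeas : MeasurableSet E := measurableSet_le hsum_meas measurable_const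
  -- the ENNReal-valued factors
  set φ : (Fin n → ℝ) → ℝ≥0∞ :=
    fun x => ENNReal.ofReal (Real.exp (-(∑ j, v j * x j)^2/6)) with hφdef
  have hφmeas : Measurable φ := by
    apply Measurable.ennreal_ofReal
    apply Real.measurable_exp.comp
    have h1 : Measurable (fun x : Fin n → ℝ => ∑ j, v j * x j) :=
      Finset.measurable_sum _ fun j _ => by fun_prop
    exact ((h1.pow_const 2).neg).div_const 6
  set g : Fin m → Ω → ℝ≥0∞ := fun i ω => φ (M ω i) with hg
  have hgmeas : ∀ i, Measurable (g i) := fun i => hφmeas.comp (hMmeas i)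
  have hgind : iIndepFun g P :=
    hMindep.comp (fun _ => φ) (fun _ => hφmeas)
  have hgval : ∀ i ω, g i ω = ENNReal.ofReal (Real.exp (-(S i ω)^2/6)) := fun i ω => rfl
  -- pointwise Chernoff bound
  have hpt : ∀ ω, E.indicator (1 : Ω → ℝ≥0∞) ω
      ≤ ENNReal.ofReal (Real.exp ((n:ℝ)/96)) * ∏ i, g i ω := by
    intro ω
    by_cases hω : ω ∈ E
    · rw [Set.indicator_of_mem hω]
      have hprod : ∏ i, g i ω
          = ENNReal.ofReal (∏ i, Real.exp (-(S i ω)^2/6)) := by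
        rw [ofReal_prod_of_nonneg (fun i _ => Real.exp_nonneg _)]
      rw [hprod, ← ENNReal.ofReal_mul (Real.exp_nonneg _)]
      have hreal : (1:ℝ) ≤ Real.exp ((n:ℝ)/96) * ∏ i, Real.exp (-(S i ω)^2/6) := by
        rw [← Real.exp_sum, ← Real.exp_add]
        have hω' : ∑ i, (S i ω)^2 ≤ (n:ℝ)/16 := hω
        have hsum : ∑ i : Fin m, -(S i ω)^2/6 = -(∑ i, (S i ω)^2)/6 := by
          rw [← Finset.sum_div, ← Finset.sum_neg_distrib]
        rw [show (1:ℝ) = Real.exp 0 from Real.exp_zero.symm]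
        apply Real.exp_le_exp.mpr
        rw [hsum]
        linarith
      exact (ENNReal.one_le_ofReal).mpr hreal
    · rw [Set.indicator_of_notMem hω]
      exact zero_le
  -- per-row bound
  have perrow : ∀ i : Fin m, ∫⁻ ω, g i ω ∂P ≤ ENNReal.ofReal (23/24) := by
    intro i
    have hmap : ∫⁻ ω, g i ω ∂P = ∫⁻ x, φ x ∂(uniformOn (signedRow n)) := by
      rw [← hMmap i, lintegral_map hφmeas (hMmeas i)]
    rw [hmap, lintegral_uniformOn hfin φ,
      Measure.count_apply_finite _ hfin]
    have hsum : ∑ x ∈ hfin.toFinset, φ x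
        = ENNReal.ofReal (∑ x ∈ hfin.toFinset, Real.exp (-(∑ j, v j * x j)^2/6)) := by
      rw [ofReal_sum_of_nonneg (fun x _ => Real.exp_nonneg _)]
    rw [hsum]
    have hrow := row_mgf hneven hfin hv1
    have hle : ENNReal.ofReal (∑ x ∈ hfin.toFinset, Real.exp (-(∑ j, v j * x j)^2/6))
        ≤ ENNReal.ofReal ((23/24) * (hfin.toFinset.card : ℝ)) := by
      apply ENNReal.ofReal_le_ofReal
      have : ∀ x : Fin n → ℝ, Real.exp (-(∑ j, v j * x j)^2/6)
          = Real.exp (-((∑ j, v j * x j)^2)/6) := fun x => by ring_nf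
      rw [Finset.sum_congr rfl fun x _ => this x]
      exact hrow
    calc (hfin.toFinset.card : ℝ≥0∞)⁻¹
          * ENNReal.ofReal (∑ x ∈ hfin.toFinset, Real.exp (-(∑ j, v j * x j)^2/6))
        ≤ (hfin.toFinset.card : ℝ≥0∞)⁻¹
          * ENNReal.ofReal ((23/24) * (hfin.toFinset.card : ℝ)) :=
          mul_le_mul_right hle _
      _ = ENNReal.ofReal (23/24) := by
          rw [ENNReal.ofReal_mul (by norm_num), ENNReal.ofReal_natCast,
            mul_comm (ENNReal.ofReal (23/24)), ← mul_assoc,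
            ENNReal.inv_mul_cancel (Nat.cast_ne_zero.mpr hNpos.ne') (natCast_ne_top _),
            one_mul]
  -- assemble
  have hgprodmeas : Measurable (fun ω => ∏ i, g i ω) :=
    Finset.measurable_prod _ fun i _ => hgmeas i
  calc P E = ∫⁻ ω, E.indicator 1 ω ∂P := (lintegral_indicator_one hEmeas).symm
    _ ≤ ∫⁻ ω, ENNReal.ofReal (Real.exp ((n:ℝ)/96)) * ∏ i, g i ω ∂P := lintegral_mono hpt
    _ = ENNReal.ofReal (Real.exp ((n:ℝ)/96)) * ∫⁻ ω, ∏ i, g i ω ∂P :=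
        lintegral_const_mul _ hgprodmeas
    _ = ENNReal.ofReal (Real.exp ((n:ℝ)/96)) * ∏ i, ∫⁻ ω, g i ω ∂P := by
        rw [lintegral_prod_of_indep hgmeas hgind Finset.univ]
    _ ≤ ENNReal.ofReal (Real.exp ((n:ℝ)/96)) * ∏ _i : Fin m, ENNReal.ofReal (23/24) :=
        mul_le_mul_right (Finset.prod_le_prod' fun i _ => perrow i) _
    _ = ENNReal.ofReal (Real.exp ((n:ℝ)/96) * (23/24)^m) := by
        rw [Finset.prod_const, Finset.card_univ, Fintype.card_fin,
          ← ENNReal.ofReal_pow (by norm_num), ← ENNReal.ofReal_mul (Real.exp_nonneg _)]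
    _ ≤ ENNReal.ofReal (2 * Real.exp (-(1/100) * n)) :=
        ENNReal.ofReal_le_ofReal (numeric_ineq hneven hm1)

end
end

section
/- Let δ, ρ ∈ (0,1). Then for any non-almost-constant vector v ∈ S^{n-1}, i.e. v ∈ S^{n-1} \ Cons(δ,ρ), there exist disjoint subsets σ₁, σ₂ ⊂ [n] with |σ₁|, |σ₂| ≥ δn/8 such that ρ/√(2n) ≤ |v_i − v_j| ≤ 6/√(δn) for all i ∈ σ₁ and all j ∈ σ₂. -/
open Real

noncomputable section

/-- A vector `v` is almost-constant (with parameters `δ, ρ`) if some `λ ∈ ℝ` satisfies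
`|v i − λ| ≤ ρ/√n` for at least `(1−δ)n` coordinates `i`. -/
def almostConst {n : ℕ} (δ ρ : ℝ) (v : Fin n → ℝ) : Prop :=
  ∃ lam : ℝ, (1 - δ) * n ≤ (Nat.card {i : Fin n // |v i - lam| ≤ ρ / Real.sqrt n} : ℝ)

set_option maxHeartbeats 1000000 in
/-- for `δ, ρ ∈ (0,1)` and any non-almost-constant unit vector `v`, there
are disjoint subsets `σ₁, σ₂ ⊂ [n]` with `|σ₁|, |σ₂| ≥ δn/8` such that
`ρ/√(2n) ≤ |v i − v j| ≤ 6/√(δn)` for all `i ∈ σ₁`, `j ∈ σ₂`. -/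
theorem stmt7 {n : ℕ} (δ ρ : ℝ) (hδ : 0 < δ) (hδ1 : δ < 1) (hρ : 0 < ρ) (hρ1 : ρ < 1)
    (v : Fin n → ℝ) (hv : pnorm v = 1) (hna : ¬ almostConst δ ρ v) :
    ∃ σ₁ σ₂ : Finset (Fin n), Disjoint σ₁ σ₂ ∧
      δ * n / 8 ≤ (σ₁.card : ℝ) ∧ δ * n / 8 ≤ (σ₂.card : ℝ) ∧
      ∀ i ∈ σ₁, ∀ j ∈ σ₂,
        ρ / Real.sqrt (2 * n) ≤ |v i - v j| ∧ |v i - v j| ≤ 6 / Real.sqrt (δ * n) := by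
  classical
  -- n ≥ 1
  rcases Nat.eq_zero_or_pos n with hn0 | hn
  · exact absurd ⟨0, by simp [hn0]⟩ hna
  have hN : (0 : ℝ) < n := by exact_mod_cast hn
  -- negation of almost-constant, in filter form
  have key : ∀ lam : ℝ,
      ((Finset.univ.filter (fun i => |v i - lam| ≤ ρ / Real.sqrt n)).card : ℝ) < (1 - δ) * n := by
    intro lam
    by_contra h
    push_neg at h
    exact hna ⟨lam, by rwa [Nat.card_eq_fintype_card, Fintype.card_subtype]⟩
  -- unit norm
  have hsum : ∑ i, v i ^ 2 = 1 := by
    have h0 : (0 : ℝ) ≤ ∑ i, v i ^ 2 := by positivity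
    have := hv
    unfold pnorm at this
    exact Real.sqrt_eq_one.mp this
  -- Chebyshev: few large coordinates
  have hδN : (0 : ℝ) < δ * n := by positivity
  have hsδN : (0 : ℝ) < Real.sqrt (δ * n) := Real.sqrt_pos.mpr hδN
  set M : ℝ := 2 / Real.sqrt (δ * n) with hMdef
  have hM : 0 < M := by positivity
  have hM2 : M ^ 2 = 4 / (δ * n) := by
    rw [hMdef, div_pow, Real.sq_sqrt hδN.le]; norm_num
  set I : Finset (Fin n) := Finset.univ.filter (fun i => |v i| < M) with hIdef
  set J : Finset (Fin n) := Finset.univ.filter (fun i => ¬ |v i| < M) with hJdef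
  have hIJ : I.card + J.card = n := by
    rw [hIdef, hJdef, Finset.card_filter_add_card_filter_not]
    simp
  have hJsum : (J.card : ℝ) * M ^ 2 ≤ 1 := by
    calc (J.card : ℝ) * M ^ 2 = ∑ _i ∈ J, M ^ 2 := by
          rw [Finset.sum_const, nsmul_eq_mul]
      _ ≤ ∑ i ∈ J, v i ^ 2 := by
          refine Finset.sum_le_sum fun i hi => ?_
          have h1 : M ≤ |v i| := not_lt.mp (Finset.mem_filter.mp hi).2
          calc M ^ 2 ≤ |v i| ^ 2 := pow_le_pow_left₀ hM.le h1 2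
            _ = v i ^ 2 := sq_abs _
      _ ≤ ∑ i, v i ^ 2 :=
          Finset.sum_le_sum_of_subset_of_nonneg (Finset.subset_univ J)
            (fun i _ _ => sq_nonneg _)
      _ = 1 := hsum
  have hJb : (J.card : ℝ) ≤ δ * n / 4 := by
    rw [hM2, ← mul_div_assoc] at hJsum
    rw [div_le_one hδN] at hJsum
    linarith
  have hIb : (n : ℝ) - δ * n / 4 ≤ I.card := by
    have : (I.card : ℝ) + J.card = n := by exact_mod_cast hIJ
    linarith
  -- the target cardinality
  set k : ℕ := ⌈δ * (n : ℝ) / 8⌉₊ with hkdef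
  have hk1 : 1 ≤ k := Nat.one_le_iff_ne_zero.mpr (by
    simp only [hkdef, ne_eq, Nat.ceil_eq_zero, not_le]
    positivity)
  have hklb : δ * (n : ℝ) / 8 ≤ k := Nat.le_ceil _
  have hkub : (k : ℝ) < δ * n / 8 + 1 := Nat.ceil_lt_add_one (by positivity)
  have hkI : k ≤ I.card := by
    rw [hkdef, Nat.ceil_le]
    push_cast
    nlinarith
  have hIne : I.Nonempty := Finset.card_pos.mp (lt_of_lt_of_le hk1 hkI)
  -- choose the threshold t₀
  set S : Finset ℝ :=
    (I.image v).filter (fun t => k ≤ (I.filter (fun i => v i ≤ t)).card) with hSdef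
  have hSne : S.Nonempty := by
    obtain ⟨i0, hi0, hmax⟩ := Finset.exists_max_image I v hIne
    refine ⟨v i0, Finset.mem_filter.mpr ⟨Finset.mem_image_of_mem v hi0, ?_⟩⟩
    refine le_trans hkI (Finset.card_le_card ?_)
    intro i hi
    exact Finset.mem_filter.mpr ⟨hi, hmax i hi⟩
  set t₀ : ℝ := S.min' hSne with ht₀def
  have ht₀S : t₀ ∈ S := S.min'_mem hSne
  have ht₀k : k ≤ (I.filter (fun i => v i ≤ t₀)).card := (Finset.mem_filter.mp ht₀S).2
  have hAlt : (I.filter (fun i => v i < t₀)).card < k := by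
    by_contra h
    push_neg at h
    set A : Finset (Fin n) := I.filter (fun i => v i < t₀) with hAdef
    have hAne : A.Nonempty := Finset.card_pos.mp (lt_of_lt_of_le hk1 h)
    obtain ⟨i1, hi1, hmax⟩ := Finset.exists_max_image A v hAne
    have hi1I : i1 ∈ I := (Finset.mem_filter.mp hi1).1
    have hlt : v i1 < t₀ := (Finset.mem_filter.mp hi1).2
    have hmem : v i1 ∈ S := by
      refine Finset.mem_filter.mpr ⟨Finset.mem_image_of_mem v hi1I, ?_⟩
      refine le_trans h (Finset.card_le_card ?_)
      intro i hi
      exact Finset.mem_filter.mpr ⟨(Finset.mem_filter.mp hi).1, hmax i hi⟩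
    exact absurd (S.min'_le _ hmem) (not_le.mpr hlt)
  -- the gap
  set ε : ℝ := ρ / Real.sqrt (2 * n) with hεdef
  have hε : 0 < ε := by positivity
  have hεle : ε ≤ ρ / Real.sqrt n := by
    rw [hεdef]
    have h1 : Real.sqrt (n : ℝ) ≤ Real.sqrt (2 * n) := Real.sqrt_le_sqrt (by linarith)
    have h2 : (0 : ℝ) < Real.sqrt n := Real.sqrt_pos.mpr hN
    exact div_le_div_of_nonneg_left hρ.le h2 h1
  set σ₁ : Finset (Fin n) := I.filter (fun i => v i ≤ t₀) with hσ₁def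
  set σ₂ : Finset (Fin n) := I.filter (fun i => t₀ + ε ≤ v i) with hσ₂def
  set A : Finset (Fin n) := I.filter (fun i => v i < t₀) with hAdef
  set Bf : Finset (Fin n) :=
    Finset.univ.filter (fun i => |v i - t₀| ≤ ρ / Real.sqrt n) with hBdef
  -- the four sets cover everything
  have hcover : (Finset.univ : Finset (Fin n)) ⊆ J ∪ A ∪ Bf ∪ σ₂ := by
    intro i _
    by_cases h1 : |v i| < M
    · have hiI : i ∈ I := Finset.mem_filter.mpr ⟨Finset.mem_univ _, h1⟩
      by_cases h2 : v i < t₀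
      · exact Finset.mem_union_left _ (Finset.mem_union_left _
          (Finset.mem_union_right _ (Finset.mem_filter.mpr ⟨hiI, h2⟩)))
      · push_neg at h2
        by_cases h3 : t₀ + ε ≤ v i
        · exact Finset.mem_union_right _ (Finset.mem_filter.mpr ⟨hiI, h3⟩)
        · push_neg at h3
          refine Finset.mem_union_left _ (Finset.mem_union_right _
            (Finset.mem_filter.mpr ⟨Finset.mem_univ _, ?_⟩))
          rw [abs_of_nonneg (by linarith)]
          linarith
    · exact Finset.mem_union_left _ (Finset.mem_union_left _
        (Finset.mem_union_left _ (Finset.mem_filter.mpr ⟨Finset.mem_univ _, h1⟩)))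
  have hcard : n ≤ J.card + A.card + Bf.card + σ₂.card := by
    have h1 : n ≤ (J ∪ A ∪ Bf ∪ σ₂).card := by
      simpa using Finset.card_le_card hcover
    have h2 := Finset.card_union_le (J ∪ A ∪ Bf) σ₂
    have h3 := Finset.card_union_le (J ∪ A) Bf
    have h4 := Finset.card_union_le J A
    omega
  have hBb : (Bf.card : ℝ) < (1 - δ) * n := key t₀
  have hAb : (A.card : ℝ) ≤ (k : ℝ) - 1 := by
    have : A.card + 1 ≤ k := hAlt
    have := (Nat.cast_le (α := ℝ)).mpr this
    push_cast at this
    linarith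
  have hcardR : (n : ℝ) ≤ (J.card : ℝ) + A.card + Bf.card + σ₂.card := by
    exact_mod_cast hcard
  -- cardinality bounds
  have hσ₂b : δ * n / 8 ≤ (σ₂.card : ℝ) := by nlinarith
  have hσ₁b : δ * n / 8 ≤ (σ₁.card : ℝ) := by
    refine le_trans hklb ?_
    exact_mod_cast ht₀k
  refine ⟨σ₁, σ₂, ?_, hσ₁b, hσ₂b, ?_⟩
  · rw [Finset.disjoint_left]
    intro i hi1 hi2
    have h1 : v i ≤ t₀ := (Finset.mem_filter.mp hi1).2
    have h2 : t₀ + ε ≤ v i := (Finset.mem_filter.mp hi2).2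
    linarith
  · intro i hi j hj
    have hi1 : v i ≤ t₀ := (Finset.mem_filter.mp hi).2
    have hj1 : t₀ + ε ≤ v j := (Finset.mem_filter.mp hj).2
    have hiM : |v i| < M := (Finset.mem_filter.mp (Finset.mem_filter.mp hi).1).2
    have hjM : |v j| < M := (Finset.mem_filter.mp (Finset.mem_filter.mp hj).1).2
    rw [abs_lt] at hiM hjM
    constructor
    · rw [abs_sub_comm, abs_of_nonneg (by linarith)]
      linarith
    · have hs4 : M + M ≤ 6 / Real.sqrt (δ * n) := by
        rw [hMdef, ← add_div]
        gcongr
        norm_num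
      rw [abs_le]
      exact ⟨by linarith [hiM.1, hjM.2], by linarith [hiM.2, hjM.1]⟩
end
end

section
/- Let δ, ρ ∈ (0,1). Then every non-almost-constant unit vector v ∈ S^{n-1} \ Cons(δ,ρ) satisfies ‖D(v)‖₂ ≥ (δρ/16)√n. -/
open Real

noncomputable section

/-- `D(v)`: the vector in `ℝ^{n(n-1)/2}` whose `(i,j)`-coordinate is `v i - v j`
for `i < j`. -/
def Dvec {n : ℕ} (v : Fin n → ℝ) : {p : Fin n × Fin n // p.1 < p.2} → ℝ :=
  fun p => v p.1.1 - v p.1.2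

lemma sum_pairs_sq {n : ℕ} (v : Fin n → ℝ) :
    ∑ p : {p : Fin n × Fin n // p.1 < p.2}, (v p.1.1 - v p.1.2) ^ 2
      = n * (∑ i, v i ^ 2) - (∑ i, v i) ^ 2 := by
  classical
  have hfull : ∑ p : Fin n × Fin n, (v p.1 - v p.2) ^ 2
      = 2 * ((n : ℝ) * (∑ i, v i ^ 2) - (∑ i, v i) ^ 2) := by
    rw [Fintype.sum_prod_type]
    have h1 : ∀ i : Fin n, ∑ j, (v i - v j) ^ 2
        = (n : ℝ) * v i ^ 2 - 2 * v i * (∑ j, v j) + ∑ j, v j ^ 2 := by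
      intro i
      have : ∀ j ∈ Finset.univ, (v i - v j) ^ 2 = v i ^ 2 - 2 * v i * v j + v j ^ 2 :=
        fun j _ => by ring
      rw [Finset.sum_congr rfl this, Finset.sum_add_distrib, Finset.sum_sub_distrib,
        ← Finset.mul_sum, Finset.sum_const, Finset.card_univ, Fintype.card_fin,
        nsmul_eq_mul]
    rw [Finset.sum_congr rfl fun i _ => h1 i]
    rw [Finset.sum_add_distrib, Finset.sum_sub_distrib, ← Finset.mul_sum,
      Finset.sum_const, Finset.card_univ, Fintype.card_fin, nsmul_eq_mul, ← Finset.sum_mul,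
      ← Finset.mul_sum]
    ring
  have hsub : ∑ p : {p : Fin n × Fin n // p.1 < p.2}, (v p.1.1 - v p.1.2) ^ 2
      = ∑ p ∈ Finset.univ.filter (fun p : Fin n × Fin n => p.1 < p.2), (v p.1 - v p.2) ^ 2 := by
    rw [← Finset.sum_subtype (Finset.univ.filter (fun p : Fin n × Fin n => p.1 < p.2))
      (fun p => by simp) (fun p : Fin n × Fin n => (v p.1 - v p.2) ^ 2)]
  have hswap : ∑ p ∈ Finset.univ.filter (fun p : Fin n × Fin n => p.1 < p.2),
        (v p.1 - v p.2) ^ 2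
      = ∑ p ∈ Finset.univ.filter (fun p : Fin n × Fin n => p.2 < p.1), (v p.1 - v p.2) ^ 2 := by
    apply Finset.sum_nbij' (fun p => p.swap) (fun p => p.swap)
    · intro p hp; simp at hp ⊢; exact hp
    · intro p hp; simp at hp ⊢; exact hp
    · intro p _; simp
    · intro p _; simp
    · intro p _; simp [Prod.swap]; ring
  have hnotsplit : ∑ p ∈ Finset.univ.filter (fun p : Fin n × Fin n => ¬ p.1 < p.2),
        (v p.1 - v p.2) ^ 2
      = ∑ p ∈ Finset.univ.filter (fun p : Fin n × Fin n => p.2 < p.1), (v p.1 - v p.2) ^ 2 := by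
    symm
    apply Finset.sum_subset
    · intro p hp; simp at hp ⊢; exact hp.le
    · intro p hp hnp
      simp at hp hnp
      have : p.1 = p.2 := le_antisymm hnp hp
      rw [this]; ring
  have hsplit := Finset.sum_filter_add_sum_filter_not Finset.univ
    (fun p : Fin n × Fin n => p.1 < p.2) (fun p => (v p.1 - v p.2) ^ 2)
  rw [hsub]
  have : 2 * (∑ p ∈ Finset.univ.filter (fun p : Fin n × Fin n => p.1 < p.2),
      (v p.1 - v p.2) ^ 2) = 2 * ((n : ℝ) * (∑ i, v i ^ 2) - (∑ i, v i) ^ 2) := by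
    rw [← hfull, ← hsplit, hnotsplit, hswap]; ring
  linarith

/-- for `δ, ρ ∈ (0,1)`, every non-almost-constant unit vector `v` satisfies
`‖D(v)‖₂ ≥ (δρ/16)√n`. -/
theorem stmt8 {n : ℕ} (δ ρ : ℝ) (hδ : 0 < δ) (hδ1 : δ < 1) (hρ : 0 < ρ) (hρ1 : ρ < 1)
    (v : Fin n → ℝ) (hv : pnorm v = 1) (hna : ¬ almostConst δ ρ v) :
    δ * ρ / 16 * Real.sqrt n ≤ pnorm (Dvec v) := by
  classical
  rcases Nat.eq_zero_or_pos n with hn0 | hn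
  · exact absurd ⟨0, by simp [hn0]⟩ hna
  have hnR : (0:ℝ) < n := by exact_mod_cast hn
  set S := ∑ i, v i with hS
  set lam := S / n with hlam
  have hQ : ∑ i, v i ^ 2 = 1 := by
    have h0 : 0 ≤ ∑ i, v i ^ 2 := Finset.sum_nonneg fun i _ => sq_nonneg _
    have h1 := hv
    unfold pnorm at h1
    nlinarith [Real.sq_sqrt h0]
  simp only [almostConst, not_exists, not_le] at hna
  have hcard := hna lam
  set A := Finset.univ.filter (fun i : Fin n => |v i - lam| ≤ ρ / Real.sqrt n) with hA
  set B := Finset.univ.filter (fun i : Fin n => ¬ |v i - lam| ≤ ρ / Real.sqrt n) with hB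
  have hAcard : (Nat.card {i : Fin n // |v i - lam| ≤ ρ / Real.sqrt n}) = A.card := by
    rw [Nat.card_eq_fintype_card, Fintype.card_subtype]
  rw [hAcard] at hcard
  have hAB : A.card + B.card = n := by
    rw [hA, hB, Finset.card_filter_add_card_filter_not, Finset.card_univ,
      Fintype.card_fin]
  have hABR : (A.card : ℝ) + B.card = n := by exact_mod_cast hAB
  have hBcard : δ * n < (B.card : ℝ) := by linarith
  have hterm : ∀ i ∈ B, (ρ / Real.sqrt n) ^ 2 ≤ (v i - lam) ^ 2 := by
    intro i hi
    rw [hB, Finset.mem_filter] at hi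
    have h1 : ρ / Real.sqrt n < |v i - lam| := lt_of_not_ge hi.2
    have h2 : (ρ / Real.sqrt n) ^ 2 ≤ |v i - lam| ^ 2 :=
      pow_le_pow_left₀ (div_nonneg hρ.le (Real.sqrt_nonneg _)) h1.le 2
    rwa [sq_abs] at h2
  have hsumB : (B.card : ℝ) * (ρ / Real.sqrt n) ^ 2 ≤ ∑ i ∈ B, (v i - lam) ^ 2 := by
    have := Finset.card_nsmul_le_sum B _ _ hterm
    simpa [nsmul_eq_mul] using this
  have hsumall : ∑ i ∈ B, (v i - lam) ^ 2 ≤ ∑ i, (v i - lam) ^ 2 :=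
    Finset.sum_le_sum_of_subset_of_nonneg (Finset.subset_univ _) fun i _ _ => sq_nonneg _
  have hexp : ∑ i, (v i - lam) ^ 2 = 1 - S ^ 2 / n := by
    have h1 : ∀ i ∈ Finset.univ, (v i - lam) ^ 2 = v i ^ 2 - 2 * lam * v i + lam ^ 2 :=
      fun i _ => by ring
    rw [Finset.sum_congr rfl h1, Finset.sum_add_distrib, Finset.sum_sub_distrib,
      ← Finset.mul_sum, Finset.sum_const, Finset.card_univ, Fintype.card_fin,
      nsmul_eq_mul, hQ, ← hS, hlam]
    field_simp
    ring
  have hsq : (ρ / Real.sqrt n) ^ 2 = ρ ^ 2 / n := by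
    rw [div_pow, Real.sq_sqrt hnR.le]
  have hkey : δ * ρ ^ 2 ≤ 1 - S ^ 2 / n := by
    rw [hsq] at hsumB
    have : δ * n * (ρ ^ 2 / n) ≤ (B.card : ℝ) * (ρ ^ 2 / n) := by
      apply mul_le_mul_of_nonneg_right hBcard.le
      positivity
    have heq : δ * n * (ρ ^ 2 / n) = δ * ρ ^ 2 := by field_simp
    linarith [hexp ▸ (hsumB.trans hsumall)]
  have hfin : (n : ℝ) * δ * ρ ^ 2 ≤ (n : ℝ) - S ^ 2 := by
    have := mul_le_mul_of_nonneg_left hkey hnR.le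
    have h2 : (n : ℝ) * (1 - S ^ 2 / n) = n - S ^ 2 := by field_simp
    nlinarith
  unfold pnorm Dvec
  have hsum : ∑ p : {p : Fin n × Fin n // p.1 < p.2}, (v p.1.1 - v p.1.2) ^ 2
      = (n : ℝ) - S ^ 2 := by
    rw [sum_pairs_sq, hQ, ← hS]; ring
  rw [hsum]
  rw [show δ * ρ / 16 * Real.sqrt n = Real.sqrt n * (δ * ρ / 16) by ring]
  rw [← Real.sqrt_sq (by positivity : (0:ℝ) ≤ δ * ρ / 16), ← Real.sqrt_mul hnR.le]
  apply Real.sqrt_le_sqrt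
  nlinarith [sq_nonneg S, sq_nonneg (δ*ρ)]
  
end
end

section
/- For all sufficiently large even n and for every fixed vector x ∈ S^{n-1}, P( ‖x^⊤ M_n‖₂ ≤ √n/36 ) ≤ e^{-n/400}, where x^⊤ M_n denotes the row vector obtained by multiplying M_n on the left by x. -/
open MeasureTheory ProbabilityTheory Real

noncomputable section

section Aux
open Finset
open scoped ENNReal
namespace S17x


def chi (b : Bool) : ℝ := if b then 1 else -1
lemma chi_sq (b : Bool) : chi b ^ 2 = 1 := by cases b <;> simp [chi]

lemma sum_const_bool (m : ℕ) : ∑ _δ : Fin m → Bool, (1:ℝ) = 2 ^ m := by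
  simp [Finset.card_univ]

lemma sum_bool_fun {m : ℕ} (F : (Fin (m+1) → Bool) → ℝ) :
    ∑ δ : Fin (m+1) → Bool, F δ = ∑ b : Bool, ∑ d : Fin m → Bool, F (Fin.cons b d) := by
  rw [← (Fintype.sum_equiv (Fin.consEquiv fun _ => Bool) (fun p => F (Fin.cons p.1 p.2)) F
    (fun p => rfl)), Fintype.sum_prod_type]

lemma mom2 (m : ℕ) (a : Fin m → ℝ) :
    ∑ δ : Fin m → Bool, (∑ i, a i * chi (δ i)) ^ 2 = 2 ^ m * ∑ i, a i ^ 2 := by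
  induction m with
  | zero => simp
  | succ m ih =>
    rw [sum_bool_fun]
    have h : ∀ (b : Bool) (d : Fin m → Bool), (∑ i : Fin (m+1), a i * chi ((Fin.cons b d : Fin (m+1) → Bool) i))
        = a 0 * chi b + ∑ i : Fin m, a i.succ * chi (d i) := by
      intro b d
      rw [Fin.sum_univ_succ]
      simp
    simp only [h]
    have expand : ∀ (b : Bool) (d : Fin m → Bool), (a 0 * chi b + ∑ i : Fin m, a i.succ * chi (d i)) ^ 2
        = (a 0)^2 * chi b ^ 2 + 2 * (a 0 * chi b) * (∑ i : Fin m, a i.succ * chi (d i))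
          + (∑ i : Fin m, a i.succ * chi (d i)) ^ 2 := by intro b d; ring
    simp only [expand, Finset.sum_add_distrib, chi_sq]
    rw [Fin.sum_univ_succ (f := fun i => a i ^ 2)]
    have hb : ∑ b : Bool, chi b = 0 := by simp [chi]
    have h1 : ∑ b : Bool, ∑ d : Fin m → Bool, (a 0)^2 * 1 = 2 * ((a 0)^2 * 2 ^ m) := by
      simp [Finset.sum_const, Finset.card_univ]; ring
    have h2 : ∑ b : Bool, ∑ d : Fin m → Bool,
        2 * (a 0 * chi b) * (∑ i : Fin m, a i.succ * chi (d i)) = 0 := by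
      rw [Fintype.sum_bool, ← Finset.sum_add_distrib]
      apply Finset.sum_eq_zero
      intro d _
      simp [chi]
    rw [h1, h2, Fintype.sum_congr _ _ (fun b => ih (fun i => a i.succ))]
    simp [Finset.sum_const, Finset.card_univ]
    ring




lemma mom4 (m : ℕ) (a : Fin m → ℝ) :
    ∑ δ : Fin m → Bool, (∑ i, a i * chi (δ i)) ^ 4 ≤ 3 * 2 ^ m * (∑ i, a i ^ 2) ^ 2 := by
  induction m with
  | zero => simp
  | succ m ih =>
    rw [sum_bool_fun]
    have h : ∀ (b : Bool) (d : Fin m → Bool), (∑ i : Fin (m + 1), a i * chi ((Fin.cons b d : Fin (m+1) → Bool) i))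
        = a 0 * chi b + ∑ i : Fin m, a i.succ * chi (d i) := by
      intro b d
      rw [Fin.sum_univ_succ]
      simp
    simp only [h]
    rw [Fintype.sum_bool, ← Finset.sum_add_distrib]
    have point : ∀ d : Fin m → Bool,
        (a 0 * chi true + ∑ i : Fin m, a i.succ * chi (d i)) ^ 4
        + (a 0 * chi false + ∑ i : Fin m, a i.succ * chi (d i)) ^ 4
        = 2 * (a 0) ^ 4 + 12 * (a 0) ^ 2 * (∑ i : Fin m, a i.succ * chi (d i)) ^ 2
          + 2 * (∑ i : Fin m, a i.succ * chi (d i)) ^ 4 := by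
      intro d; simp only [chi]; norm_num; ring
    rw [Finset.sum_congr rfl (fun d _ => point d)]
    rw [Finset.sum_add_distrib, Finset.sum_add_distrib, Finset.sum_const, Finset.card_univ,
      ← Finset.mul_sum, ← Finset.mul_sum, mom2]
    have card2 : (Fintype.card (Fin m → Bool)) = 2 ^ m := by
      simp [Fintype.card_fun]
    rw [card2]
    have ihs := ih (fun i => a i.succ)
    rw [Fin.sum_univ_succ (f := fun i => a i ^ 2)]
    have h2m : (0:ℝ) < 2 ^ m := by positivity
    rw [nsmul_eq_mul, pow_succ (2:ℝ) m]
    push_cast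
    nlinarith [ihs, h2m, mul_nonneg h2m.le (sq_nonneg ((a 0) ^ 2)),
      mul_nonneg h2m.le (sq_nonneg (a 0)),
      mul_nonneg h2m.le (sq_nonneg (∑ i : Fin m, a i.succ ^ 2))]





lemma exp_neg_le (u : ℝ) (hu : 0 ≤ u) : Real.exp (-u) ≤ 1 - u + u ^ 2 := by
  have hA := Real.add_one_le_exp u
  have hApos := Real.exp_pos u
  have hq : (0:ℝ) ≤ 1 - u + u ^ 2 := by nlinarith [sq_nonneg (1 - u), sq_nonneg u]
  have key : 1 ≤ (1 - u + u ^ 2) * Real.exp u := by nlinarith [mul_le_mul_of_nonneg_left hA hq]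
  rw [Real.exp_neg, inv_eq_one_div, div_le_iff₀ hApos]
  linarith

lemma column (m : ℕ) (a : Fin m → ℝ) (h1 : ∑ i, a i ^ 2 ≤ 1) :
    ∑ δ : Fin m → Bool, Real.exp (-(∑ i, a i * chi (δ i)) ^ 2 / 6)
      ≤ 2 ^ m * Real.exp (-(∑ i, a i ^ 2) / 12) := by
  have σnn : (0:ℝ) ≤ ∑ i, a i ^ 2 := Finset.sum_nonneg fun i _ => sq_nonneg _
  have step1 : ∑ δ : Fin m → Bool, Real.exp (-(∑ i, a i * chi (δ i)) ^ 2 / 6)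
      ≤ ∑ δ : Fin m → Bool, (1 - (∑ i, a i * chi (δ i)) ^ 2 / 6
          + (∑ i, a i * chi (δ i)) ^ 4 / 36) := by
    apply Finset.sum_le_sum
    intro δ _
    have h := exp_neg_le ((∑ i, a i * chi (δ i)) ^ 2 / 6) (by positivity)
    calc Real.exp (-(∑ i, a i * chi (δ i)) ^ 2 / 6)
        = Real.exp (-((∑ i, a i * chi (δ i)) ^ 2 / 6)) := by rw [neg_div]
      _ ≤ 1 - (∑ i, a i * chi (δ i)) ^ 2 / 6 + ((∑ i, a i * chi (δ i)) ^ 2 / 6) ^ 2 := h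
      _ = 1 - (∑ i, a i * chi (δ i)) ^ 2 / 6 + (∑ i, a i * chi (δ i)) ^ 4 / 36 := by ring
  have step2 : ∑ δ : Fin m → Bool, (1 - (∑ i, a i * chi (δ i)) ^ 2 / 6
          + (∑ i, a i * chi (δ i)) ^ 4 / 36)
      = 2 ^ m - (2 ^ m * ∑ i, a i ^ 2) / 6
        + (∑ δ : Fin m → Bool, (∑ i, a i * chi (δ i)) ^ 4) / 36 := by
    rw [Finset.sum_add_distrib, Finset.sum_sub_distrib, Finset.sum_const, Finset.card_univ,
      ← Finset.sum_div, ← Finset.sum_div, mom2]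
    simp [Fintype.card_fun]
  have h4 := mom4 m a
  have hfin : (2:ℝ) ^ m - (2 ^ m * ∑ i, a i ^ 2) / 6 + (3 * 2 ^ m * (∑ i, a i ^ 2) ^ 2) / 36
      ≤ 2 ^ m * Real.exp (-(∑ i, a i ^ 2) / 12) := by
    have hexp : 1 - (∑ i, a i ^ 2) / 12 ≤ Real.exp (-(∑ i, a i ^ 2) / 12) := by
      have := Real.add_one_le_exp (-(∑ i, a i ^ 2) / 12)
      linarith
    have h2m : (0:ℝ) < 2 ^ m := by positivity
    have hq : (∑ i, a i ^ 2) ^ 2 ≤ ∑ i, a i ^ 2 := by nlinarith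
    have : (2:ℝ) ^ m - (2 ^ m * ∑ i, a i ^ 2) / 6 + (3 * 2 ^ m * (∑ i, a i ^ 2) ^ 2) / 36
        ≤ 2 ^ m * (1 - (∑ i, a i ^ 2) / 12) := by nlinarith [mul_le_mul_of_nonneg_left hq h2m.le]
    calc _ ≤ 2 ^ m * (1 - (∑ i, a i ^ 2) / 12) := this
      _ ≤ 2 ^ m * Real.exp (-(∑ i, a i ^ 2) / 12) := by
          exact mul_le_mul_of_nonneg_left hexp h2m.le
  calc ∑ δ : Fin m → Bool, Real.exp (-(∑ i, a i * chi (δ i)) ^ 2 / 6)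
      ≤ 2 ^ m - (2 ^ m * ∑ i, a i ^ 2) / 6
        + (∑ δ : Fin m → Bool, (∑ i, a i * chi (δ i)) ^ 4) / 36 := by
        rw [← step2]; exact step1
    _ ≤ 2 ^ m - (2 ^ m * ∑ i, a i ^ 2) / 6 + (3 * 2 ^ m * (∑ i, a i ^ 2) ^ 2) / 36 := by
        linarith [h4]
    _ ≤ 2 ^ m * Real.exp (-(∑ i, a i ^ 2) / 12) := hfin




lemma signedRow_finite (n : ℕ) : (signedRow n).Finite := by
  apply Set.Finite.subset (Set.Finite.pi (fun i : Fin n =>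
    (Set.finite_singleton (-1:ℝ)).insert 0 |>.insert 1))
  intro v hv
  simp only [Set.mem_pi, Set.mem_univ, forall_true_left, Set.mem_insert_iff,
    Set.mem_singleton_iff]
  intro i
  rcases hv.1 i with h | h | h <;> simp [h]

def Fset (n : ℕ) : Finset (Fin n → ℝ) := (signedRow_finite n).toFinset

lemma mem_Fset {n : ℕ} {v : Fin n → ℝ} : v ∈ Fset n ↔ v ∈ signedRow n :=
  Set.Finite.mem_toFinset _

-- zero count as finset cards
lemma zero_card {n : ℕ} {v : Fin n → ℝ} (hv : v ∈ signedRow n) :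
    (univ.filter (fun i => v i = 0)).card = n / 2 := by
  classical
  have := hv.2
  rwa [Nat.card_eq_fintype_card, Fintype.card_subtype] at this

lemma nonzero_card {n : ℕ} (hn : Even n) {v : Fin n → ℝ} (hv : v ∈ signedRow n) :
    (univ.filter (fun i => v i ≠ 0)).card = n / 2 := by
  classical
  simp only [ne_eq]
  have h := Finset.card_filter_add_card_filter_not (s := (univ : Finset (Fin n)))
    (p := fun i => v i = 0)
  rw [zero_card hv, Finset.card_univ, Fintype.card_fin] at h
  obtain ⟨k, hk⟩ := hn
  have hk2 : n / 2 = k := by omega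
  omega

end S17x

namespace S17x

def vec (n : ℕ) (p : Finset (Fin n) × (Fin n → Bool)) : Fin n → ℝ :=
  fun j => if j ∈ p.1 then chi (p.2 j) else 0

def Sup (n : ℕ) : Finset (Finset (Fin n)) := univ.powersetCard (n / 2)

lemma chi_ne_zero (b : Bool) : chi b ≠ 0 := by cases b <;> simp [chi]

lemma vec_mem {n : ℕ} (hn : Even n) {p : Finset (Fin n) × (Fin n → Bool)}
    (hp : p ∈ (Sup n) ×ˢ (univ : Finset (Fin n → Bool))) : vec n p ∈ signedRow n := by
  classical
  rw [Finset.mem_product, Sup, Finset.mem_powersetCard_univ] at hp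
  constructor
  · intro i
    by_cases h : i ∈ p.1
    · rcases Bool.dichotomy (p.2 i) with hb | hb <;> simp [vec, h, chi, hb]
    · simp [vec, h]
  · rw [Nat.card_eq_fintype_card, Fintype.card_subtype]
    have : ∀ i, vec n p i = 0 ↔ i ∉ p.1 := by
      intro i
      by_cases h : i ∈ p.1
      · simp [vec, h, chi_ne_zero]
      · simp [vec, h]
    rw [Finset.filter_congr (fun i _ => by rw [this i])]
    have hcompl : (univ.filter (fun i => i ∉ p.1)).card = n - n / 2 := by
      rw [Finset.filter_not, Finset.filter_mem_eq_inter, Finset.univ_inter,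
        Finset.card_sdiff_of_subset (Finset.subset_univ _), Finset.card_univ, Fintype.card_fin, hp.1]
    obtain ⟨k, hk⟩ := hn
    omega

-- the fiber of `vec` over `v ∈ signedRow n` has cardinality `2 ^ (n / 2)`
lemma fiber_card {n : ℕ} (hn : Even n) {v : Fin n → ℝ} (hv : v ∈ signedRow n) :
    ((Sup n ×ˢ (univ : Finset (Fin n → Bool))).filter (fun p => vec n p = v)).card
      = 2 ^ (n / 2) := by
  classical
  set sv : Finset (Fin n) := univ.filter (fun i => v i ≠ 0) with hsv
  have hfib : (Sup n ×ˢ (univ : Finset (Fin n → Bool))).filter (fun p => vec n p = v)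
      = {sv} ×ˢ (univ.filter (fun ε : Fin n → Bool => ∀ j ∈ sv, chi (ε j) = v j)) := by
    ext p
    simp only [Finset.mem_filter, Finset.mem_product, Finset.mem_singleton,
      Finset.mem_univ, true_and]
    constructor
    · rintro ⟨⟨hs, -⟩, hvec⟩
      have hmem : ∀ j, j ∈ p.1 ↔ v j ≠ 0 := by
        intro j
        by_cases h : j ∈ p.1
        · simp only [h, true_iff]
          rw [← hvec]
          simp [vec, h, chi_ne_zero]
        · simp only [h, false_iff, not_not]
          rw [← hvec]; simp [vec, h]
      constructor
      · ext j; simp [hsv, hmem j]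
      · intro j hj
        rw [hsv, Finset.mem_filter] at hj
        rw [← hvec]
        simp [vec, (hmem j).mpr hj.2]
    · rintro ⟨hs, hε⟩
      have hcard : p.1 ∈ Sup n := by
        rw [Sup, Finset.mem_powersetCard_univ, hs, hsv, nonzero_card hn hv]
      refine ⟨⟨hcard, trivial⟩, ?_⟩
      funext j
      by_cases h : j ∈ p.1
      · have : j ∈ sv := hs ▸ h
        simpa [vec, h] using hε j this
      · have : v j = 0 := by
          have hj' := hs ▸ h
          rw [hsv, Finset.mem_filter] at hj'
          simp only [Finset.mem_univ, true_and] at hj'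
          push_neg at hj'
          exact hj'
        simp [vec, h, this]
  rw [hfib, Finset.card_product, Finset.card_singleton, one_mul]
  -- count sign patterns: filter equals a piFinset
  have hEv : (univ.filter (fun ε : Fin n → Bool => ∀ j ∈ sv, chi (ε j) = v j))
      = Fintype.piFinset (fun j => if j ∈ sv then {decide (v j = 1)} else (univ : Finset Bool)) := by
    ext ε
    simp only [Finset.mem_filter, Finset.mem_univ, true_and, Fintype.mem_piFinset]
    constructor
    · intro h j
      by_cases hj : j ∈ sv
      · simp only [hj, if_true, Finset.mem_singleton]
        have hchi := h j hj
        rcases hv.1 j with h1 | h1 | h1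
        · have hb : ε j = false := by
            cases hb : ε j
            · rfl
            · rw [hb, h1] at hchi; norm_num [chi] at hchi
          rw [hb, h1]; norm_num
        · exact absurd h1 (by rw [hsv, Finset.mem_filter] at hj; exact hj.2)
        · have hb : ε j = true := by
            cases hb : ε j
            · rw [hb, h1] at hchi; norm_num [chi] at hchi
            · rfl
          rw [hb, h1]; simp
      · simp [hj]
    · intro h j hj
      have hdec := h j
      simp only [hj, if_true, Finset.mem_singleton] at hdec
      rcases hv.1 j with h1 | h1 | h1
      · have : ε j = false := by rw [hdec, h1]; norm_num
        rw [this, h1]; simp [chi]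
      · exact absurd h1 (by rw [hsv, Finset.mem_filter] at hj; exact hj.2)
      · have : ε j = true := by rw [hdec, h1]; simp
        rw [this, h1]; simp [chi]
  rw [hEv, Fintype.card_piFinset]
  have hcards : ∀ j : Fin n, (if j ∈ sv then ({decide (v j = 1)} : Finset Bool) else univ).card
      = if j ∈ sv then 1 else 2 := by
    intro j; by_cases h : j ∈ sv <;> simp [h]
  rw [Finset.prod_congr rfl (fun j _ => hcards j), Finset.prod_ite, Finset.prod_const_one,
    one_mul, Finset.prod_const]
  congr 1
  have : (univ.filter (fun j => j ∉ sv)).card = n - n / 2 := by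
    rw [Finset.filter_not, Finset.filter_mem_eq_inter, Finset.univ_inter,
      Finset.card_sdiff_of_subset (Finset.subset_univ _), Finset.card_univ, Fintype.card_fin,
      hsv, nonzero_card hn hv]
  rw [this]
  obtain ⟨k, hk⟩ := hn
  omega

end S17x

namespace S17x

lemma sum_fiber {α β : Type*} [DecidableEq β] (Q : Finset α) (F : Finset β) (φ : α → β) (m : ℕ)
    (hmaps : ∀ p ∈ Q, φ p ∈ F)
    (hfib : ∀ v ∈ F, (Q.filter (fun p => φ p = v)).card = m)
    (h : β → ℝ) : ∑ p ∈ Q, h (φ p) = m * ∑ v ∈ F, h v := by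
  rw [← Finset.sum_fiberwise_of_maps_to hmaps (fun p => h (φ p)), Finset.mul_sum]
  apply Finset.sum_congr rfl
  intro v hv
  rw [Finset.sum_congr rfl (fun p hp => by rw [(Finset.mem_filter.mp hp).2]),
    Finset.sum_const, hfib v hv, nsmul_eq_mul]

-- tuple version
lemma sum_fiber_pi {α β : Type*} [DecidableEq β] (n : ℕ)
    (Q : Finset α) (F : Finset β) (φ : α → β) (m : ℕ)
    (hmaps : ∀ p ∈ Q, φ p ∈ F)
    (hfib : ∀ v ∈ F, (Q.filter (fun p => φ p = v)).card = m)
    (G : (Fin n → β) → ℝ) :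
    ∑ t ∈ Fintype.piFinset (fun _ : Fin n => Q), G (fun i => φ (t i))
      = (m : ℝ) ^ n * ∑ w ∈ Fintype.piFinset (fun _ : Fin n => F), G w := by
  classical
  have := sum_fiber (Fintype.piFinset (fun _ : Fin n => Q))
    (Fintype.piFinset (fun _ : Fin n => F)) (fun t i => φ (t i)) (m ^ n)
    (fun t ht => by
      rw [Fintype.mem_piFinset] at ht ⊢
      exact fun i => hmaps _ (ht i))
    (fun w hw => by
      rw [Fintype.mem_piFinset] at hw
      have hset : (Fintype.piFinset (fun _ : Fin n => Q)).filter
          (fun t => (fun i => φ (t i)) = w)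
          = Fintype.piFinset (fun i => Q.filter (fun p => φ p = w i)) := by
        ext t
        simp only [Finset.mem_filter, Fintype.mem_piFinset, funext_iff]
        exact ⟨fun h => fun i => ⟨h.1 i, h.2 i⟩, fun h => ⟨fun i => (h i).1, fun i => (h i).2⟩⟩
      rw [hset, Fintype.card_piFinset]
      rw [Finset.prod_congr rfl (fun i _ => hfib (w i) (hw i)), Finset.prod_const,
        Finset.card_univ, Fintype.card_fin])
    G
  rw [this]
  push_cast
  ring

lemma card_identity (n : ℕ) (hn : Even n) :
    ((Fset n).card : ℝ) * 2 ^ (n / 2) = ((Sup n).card : ℝ) * 2 ^ n := by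
  classical
  have := sum_fiber (Sup n ×ˢ (univ : Finset (Fin n → Bool))) (Fset n) (vec n) (2 ^ (n / 2))
    (fun p hp => mem_Fset.mpr (vec_mem hn hp))
    (fun v hv => fiber_card hn (mem_Fset.mp hv))
    (fun _ => (1 : ℝ))
  simp only [Finset.sum_const, nsmul_eq_mul, mul_one] at this
  rw [Finset.card_product, Finset.card_univ] at this
  have hcard : (Fintype.card (Fin n → Bool)) = 2 ^ n := by simp [Fintype.card_fun]
  rw [hcard] at this
  push_cast at this ⊢
  linarith

end S17x

namespace S17x

lemma core (n : ℕ) (hn : Even n) (x : Fin n → ℝ) (hx : ∑ i, x i ^ 2 = 1) :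
    ∑ w ∈ Fintype.piFinset (fun _ : Fin n => Fset n),
        ∏ j, Real.exp (-(∑ i, x i * w i j) ^ 2 / 6)
      ≤ ((Fset n).card : ℝ) ^ n * Real.exp (-(n : ℝ) / 24) := by
  classical
  set G : (Fin n → (Fin n → ℝ)) → ℝ :=
    fun w => ∏ j, Real.exp (-(∑ i, x i * w i j) ^ 2 / 6) with hG
  have tf := sum_fiber_pi n (Sup n ×ˢ (univ : Finset (Fin n → Bool))) (Fset n) (vec n)
    (2 ^ (n / 2))
    (fun p hp => mem_Fset.mpr (vec_mem hn hp))
    (fun v hv => fiber_card hn (mem_Fset.mp hv)) G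
  -- split the parametrized sum into supports and signs
  have split : ∑ t ∈ Fintype.piFinset (fun _ : Fin n => Sup n ×ˢ (univ : Finset (Fin n → Bool))),
        G (fun i => vec n (t i))
      = ∑ S ∈ Fintype.piFinset (fun _ : Fin n => Sup n), ∑ E : Fin n → (Fin n → Bool),
          G (fun i => vec n (S i, E i)) := by
    rw [← Finset.sum_product']
    apply Finset.sum_nbij' (i := fun t => ((fun i => (t i).1), (fun i => (t i).2)))
      (j := fun p => fun i => (p.1 i, p.2 i))
    · intro t ht
      rw [Fintype.mem_piFinset] at ht
      rw [Finset.mem_product]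
      constructor
      · rw [Fintype.mem_piFinset]; intro i; exact (Finset.mem_product.mp (ht i)).1
      · exact Finset.mem_univ _
    · intro p hp
      rw [Finset.mem_product, Fintype.mem_piFinset] at hp
      rw [Fintype.mem_piFinset]
      intro i
      rw [Finset.mem_product]
      exact ⟨hp.1 i, Finset.mem_univ _⟩
    · intro t _; rfl
    · intro p _; rfl
    · intro t _; rfl
  -- bound the inner sum for a fixed support pattern S
  have inner : ∀ S ∈ Fintype.piFinset (fun _ : Fin n => Sup n),
      ∑ E : Fin n → (Fin n → Bool), G (fun i => vec n (S i, E i))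
        ≤ ((2:ℝ) ^ n) ^ n * Real.exp (-(n : ℝ) / 24) := by
    intro S hS
    rw [Fintype.mem_piFinset] at hS
    -- rewrite the matrix entry
    have hentry : ∀ (E : Fin n → (Fin n → Bool)) (j : Fin n),
        (∑ i, x i * vec n (S i, E i) j)
          = ∑ i, (if j ∈ S i then x i else 0) * chi (E i j) := by
      intro E j
      apply Finset.sum_congr rfl
      intro i _
      by_cases h : j ∈ S i <;> simp [vec, h]
    have hGrw : ∀ E : Fin n → (Fin n → Bool),
        G (fun i => vec n (S i, E i))
          = ∏ j, Real.exp (-(∑ i, (if j ∈ S i then x i else 0) * chi (E i j)) ^ 2 / 6) := by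
      intro E
      rw [hG]
      exact Finset.prod_congr rfl (fun j _ => by rw [hentry E j])
    rw [Fintype.sum_congr _ _ hGrw]
    -- transpose the sign matrix
    have htrans : ∑ E : Fin n → (Fin n → Bool),
        ∏ j, Real.exp (-(∑ i, (if j ∈ S i then x i else 0) * chi (E i j)) ^ 2 / 6)
        = ∑ E : Fin n → (Fin n → Bool),
            ∏ j, Real.exp (-(∑ i, (if j ∈ S i then x i else 0) * chi (E j i)) ^ 2 / 6) := by
      apply Fintype.sum_bijective (fun (E : Fin n → Fin n → Bool) => fun j i => E i j)
      · exact Function.Involutive.bijective (fun E => rfl)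
      · intro E; rfl
    have hfactor := Finset.prod_univ_sum (fun _ : Fin n => (univ : Finset (Fin n → Bool)))
      (fun j δ => Real.exp (-(∑ i, (if j ∈ S i then x i else 0) * chi (δ i)) ^ 2 / 6))
    rw [Fintype.piFinset_univ] at hfactor
    rw [htrans, ← hfactor]
    -- bound each column
    have hcol : ∀ j : Fin n,
        ∑ δ : Fin n → Bool, Real.exp (-(∑ i, (if j ∈ S i then x i else 0) * chi (δ i)) ^ 2 / 6)
          ≤ 2 ^ n * Real.exp (-(∑ i, (if j ∈ S i then x i ^ 2 else 0)) / 12) := by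
      intro j
      have h1 : ∑ i, (if j ∈ S i then x i else 0) ^ 2 ≤ 1 := by
        rw [← hx]
        apply Finset.sum_le_sum
        intro i _
        by_cases h : j ∈ S i <;> simp [h, sq_nonneg]
      have := column n (fun i => if j ∈ S i then x i else 0) h1
      have hsq : ∑ i, (if j ∈ S i then x i else 0) ^ 2 = ∑ i, (if j ∈ S i then x i ^ 2 else 0) := by
        apply Finset.sum_congr rfl
        intro i _
        by_cases h : j ∈ S i <;> simp [h]
      rwa [hsq] at this
    calc ∏ j, ∑ δ : Fin n → Bool,
          Real.exp (-(∑ i, (if j ∈ S i then x i else 0) * chi (δ i)) ^ 2 / 6)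
        ≤ ∏ j, (2 ^ n * Real.exp (-(∑ i, (if j ∈ S i then x i ^ 2 else 0)) / 12)) := by
          apply Finset.prod_le_prod
          · intro j _
            apply Finset.sum_nonneg
            intro δ _
            positivity
          · intro j _
            exact hcol j
      _ = ((2:ℝ) ^ n) ^ n * Real.exp (-(n : ℝ) / 24) := by
          rw [Finset.prod_mul_distrib, Finset.prod_const, Finset.card_univ, Fintype.card_fin,
            ← Real.exp_sum]
          congr 2
          rw [← Finset.sum_div, Finset.sum_neg_distrib]
          have hswap : ∑ j : Fin n, ∑ i, (if j ∈ S i then x i ^ 2 else 0)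
              = ∑ i : Fin n, x i ^ 2 * (n / 2 : ℕ) := by
            rw [Finset.sum_comm]
            apply Finset.sum_congr rfl
            intro i _
            have hcard : (S i).card = n / 2 := Finset.mem_powersetCard_univ.mp (hS i)
            rw [Finset.sum_ite_mem, Finset.univ_inter, Finset.sum_const, ← hcard]
            simp [mul_comm]
          rw [hswap, ← Finset.sum_mul, hx, one_mul]
          obtain ⟨k, hk⟩ := hn
          have : n / 2 = k := by omega
          rw [this, hk]
          push_cast
          ring
  -- combine
  have main : ∑ t ∈ Fintype.piFinset (fun _ : Fin n => Sup n ×ˢ (univ : Finset (Fin n → Bool))),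
      G (fun i => vec n (t i))
      ≤ ((Sup n).card : ℝ) ^ n * (((2:ℝ) ^ n) ^ n * Real.exp (-(n : ℝ) / 24)) := by
    rw [split]
    calc ∑ S ∈ Fintype.piFinset (fun _ : Fin n => Sup n), ∑ E : Fin n → (Fin n → Bool),
          G (fun i => vec n (S i, E i))
        ≤ ∑ S ∈ Fintype.piFinset (fun _ : Fin n => Sup n),
            (((2:ℝ) ^ n) ^ n * Real.exp (-(n : ℝ) / 24)) := Finset.sum_le_sum inner
      _ = ((Sup n).card : ℝ) ^ n * (((2:ℝ) ^ n) ^ n * Real.exp (-(n : ℝ) / 24)) := by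
          rw [Finset.sum_const, Fintype.card_piFinset, Finset.prod_const, Finset.card_univ,
            Fintype.card_fin, nsmul_eq_mul]
          push_cast
          ring
  rw [tf] at main
  have hpos : (0:ℝ) < ((2 ^ (n / 2) : ℕ) : ℝ) ^ n := by positivity
  have hrhs : ((2 ^ (n / 2) : ℕ) : ℝ) ^ n * (((Fset n).card : ℝ) ^ n * Real.exp (-(n : ℝ) / 24))
      = ((Sup n).card : ℝ) ^ n * (((2:ℝ) ^ n) ^ n * Real.exp (-(n : ℝ) / 24)) := by
    have hci := card_identity n hn
    have : (((Fset n).card : ℝ) * 2 ^ (n / 2)) ^ n = (((Sup n).card : ℝ) * 2 ^ n) ^ n := by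
      rw [hci]
    rw [mul_pow, mul_pow] at this
    push_cast
    linear_combination Real.exp (-(n:ℝ)/24) * this
  exact le_of_mul_le_mul_left (by rw [hrhs]; exact main) hpos

end S17x

namespace S17x

lemma uniformOn_eq (n : ℕ) :
    uniformOn (signedRow n)
      = (((Fset n).card : ℝ≥0∞))⁻¹ • ∑ a ∈ Fset n, Measure.dirac a := by
  classical
  have hms : MeasurableSet (signedRow n) := (signedRow_finite n).measurableSet
  ext s hs
  rw [uniformOn, cond_apply hms, Measure.smul_apply, Measure.finset_sum_apply]
  have hcount1 : Measure.count (signedRow n) = (Fset n).card := by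
    rw [Measure.count_apply_finite _ (signedRow_finite n)]
    rfl
  have hcount2 : Measure.count (signedRow n ∩ s)
      = ((Fset n).filter (fun a => a ∈ s)).card := by
    rw [Measure.count_apply_finite _ ((signedRow_finite n).inter_of_left s)]
    congr 1
    norm_cast
    apply Finset.card_nbij id
    · intro a ha
      rw [Finset.mem_coe, Set.Finite.mem_toFinset] at ha
      simpa [Finset.mem_filter, mem_Fset] using ⟨ha.1, ha.2⟩
    · exact Function.Injective.injOn (fun a b h => h)
    · intro a ha
      simp only [Finset.coe_filter, Set.mem_setOf_eq] at ha
      refine ⟨a, ?_, rfl⟩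
      simp only [Set.Finite.coe_toFinset]
      exact ⟨mem_Fset.mp ha.1, ha.2⟩
  rw [hcount1, hcount2, smul_eq_mul]
  congr 1
  rw [Finset.sum_congr rfl (fun a _ => Measure.dirac_apply' a hs)]
  rw [Finset.sum_indicator_eq_sum_filter]
  simp

lemma pi_uniform (n : ℕ) :
    Measure.pi (fun _ : Fin n => uniformOn (signedRow n))
      = (((Fset n).card : ℝ≥0∞))⁻¹ ^ n
          • ∑ w ∈ Fintype.piFinset (fun _ : Fin n => Fset n), Measure.dirac w := by
  classical
  apply Measure.pi_eq
  intro s hs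
  rw [Measure.smul_apply, Measure.finset_sum_apply]
  have hdirac : ∀ w ∈ Fintype.piFinset (fun _ : Fin n => Fset n),
      Measure.dirac w (Set.pi Set.univ s)
        = ∏ i, (s i).indicator (1 : (Fin n → ℝ) → ℝ≥0∞) (w i) := by
    intro w _
    rw [Measure.dirac_apply' w (MeasurableSet.univ_pi hs)]
    by_cases h : w ∈ Set.pi Set.univ s
    · rw [Set.indicator_of_mem h]
      rw [Set.mem_univ_pi] at h
      rw [Finset.prod_congr rfl (fun i _ => Set.indicator_of_mem (h i) _)]
      simp
    · rw [Set.indicator_of_notMem h]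
      rw [Set.mem_univ_pi] at h
      push_neg at h
      obtain ⟨i, hi⟩ := h
      exact (Finset.prod_eq_zero (Finset.mem_univ i)
        (by rw [Set.indicator_of_notMem hi])).symm
  rw [Finset.sum_congr rfl hdirac, ← Finset.prod_univ_sum]
  rw [Finset.prod_congr rfl (fun i (_ : i ∈ univ) => (by
      rw [uniformOn_eq n, Measure.smul_apply, Measure.finset_sum_apply, smul_eq_mul,
        Finset.sum_congr rfl (fun a _ => Measure.dirac_apply' a (hs i))]
      : uniformOn (signedRow n) (s i)
        = ((Fset n).card : ℝ≥0∞)⁻¹ * ∑ a ∈ Fset n, (s i).indicator (1 : (Fin n → ℝ) → ℝ≥0∞) a)),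
    Finset.prod_mul_distrib, Finset.prod_const, Finset.card_univ, Fintype.card_fin]
  rw [smul_eq_mul]

end S17x

end Aux

open Finset S17x
open scoped ENNReal

/-- for all sufficiently large even `n` and every fixed unit vector `x`,
`P(‖x^⊤ M_n‖₂ ≤ √n/36) ≤ e^{-n/400}` for the signed random combinatorial matrix `M_n`. -/
theorem stmt17 :
    ∃ N : ℕ, ∀ n : ℕ, N ≤ n → Even n →
    ∀ (Ω : Type) (_ : MeasurableSpace Ω) (P : Measure Ω), IsProbabilityMeasure P →
    ∀ M : Ω → Matrix (Fin n) (Fin n) ℝ,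
      (∀ i, Measurable fun ω => M ω i) →
      iIndepFun (fun i ω => M ω i) P →
      (∀ i, Measure.map (fun ω => M ω i) P = uniformOn (signedRow n)) →
    ∀ x : Fin n → ℝ, pnorm x = 1 →
      P {ω | pnorm (Matrix.vecMul x (M ω)) ≤ Real.sqrt n / 36} ≤
        ENNReal.ofReal (Real.exp (-(n : ℝ) / 400)) := by
  classical
  refine ⟨1, fun n hn1 hneven Ω mΩ P hP M hrows hindep hmap x hx => ?_⟩
  have hx2 : ∑ i, x i ^ 2 = 1 := by
    rw [pnorm] at hx
    have h0 : (0:ℝ) ≤ ∑ i, x i ^ 2 := Finset.sum_nonneg fun i _ => sq_nonneg _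
    nlinarith [Real.sq_sqrt h0]
  set Mf : Ω → (Fin n → Fin n → ℝ) := fun ω i => M ω i with hMf
  have hM : Measurable Mf := measurable_pi_iff.mpr hrows
  -- the row distribution is a probability measure
  set ν := uniformOn (signedRow n) with hν
  have i0 : Fin n := ⟨0, by omega⟩
  have hprob : IsProbabilityMeasure ν := by
    rw [← hmap i0]
    exact Measure.isProbabilityMeasure_map (hrows i0).aemeasurable
  -- joint law is the product measure
  have hjoint : Measure.map Mf P = Measure.pi (fun _ : Fin n => ν) := by
    symm
    apply Measure.pi_eq
    intro s hs
    rw [Measure.map_apply hM (MeasurableSet.univ_pi hs)]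
    have hpre : Mf ⁻¹' (Set.pi Set.univ s)
        = ⋂ i ∈ (univ : Finset (Fin n)), (fun ω => M ω i) ⁻¹' (s i) := by
      ext ω
      simp [Set.mem_univ_pi, hMf]
    rw [hpre, hindep.measure_inter_preimage_eq_mul univ (fun i _ => hs i)]
    exact Finset.prod_congr rfl
      (fun i _ => by rw [← hmap i, Measure.map_apply (hrows i) (hs i)])
  -- nonemptiness of signedRow
  have hne : (signedRow n).Nonempty := by
    rcases Set.eq_empty_or_nonempty (signedRow n) with h | h
    · exfalso
      have h1 : ν Set.univ = 1 := measure_univ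
      rw [hν, h, uniformOn_empty_meas] at h1
      simp at h1
    · exact h
  have hcard_pos : 0 < (Fset n).card := Finset.card_pos.mpr ⟨hne.choose, mem_Fset.mpr hne.choose_spec⟩
  -- the test function
  set g : (Fin n → Fin n → ℝ) → ℝ≥0∞ :=
    fun A => ENNReal.ofReal (∏ j, Real.exp (-(∑ i, x i * A i j) ^ 2 / 6)) with hg
  have hZmeas : ∀ j : Fin n, Measurable (fun A : Fin n → Fin n → ℝ => ∑ i, x i * A i j) :=
    fun j => Finset.measurable_sum _ (fun i _ =>
      measurable_const.mul ((measurable_pi_apply j).comp (measurable_pi_apply i)))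
  have hgmeas : Measurable g := by
    apply Measurable.ennreal_ofReal
    apply Finset.measurable_prod
    intro j _
    exact Real.measurable_exp.comp (((hZmeas j).pow_const 2).neg.div_const 6)
  set c0 : ℝ≥0∞ := ENNReal.ofReal (Real.exp (-(n : ℝ) / 7776)) with hc0
  -- event inclusion
  have hsub : {ω | pnorm (Matrix.vecMul x (M ω)) ≤ Real.sqrt n / 36}
      ⊆ {ω | c0 ≤ g (Mf ω)} := by
    intro ω hω
    simp only [Set.mem_setOf_eq] at hω ⊢
    have hYj : ∀ j, Matrix.vecMul x (M ω) j = ∑ i, x i * Mf ω i j := by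
      intro j
      simp [Matrix.vecMul, dotProduct, hMf]
    have hS0 : (0:ℝ) ≤ ∑ j, (∑ i, x i * Mf ω i j) ^ 2 :=
      Finset.sum_nonneg fun j _ => sq_nonneg _
    have hsq : ∑ j, (∑ i, x i * Mf ω i j) ^ 2 ≤ (n : ℝ) / 1296 := by
      rw [pnorm] at hω
      have hsum_eq : ∑ j, Matrix.vecMul x (M ω) j ^ 2 = ∑ j, (∑ i, x i * Mf ω i j) ^ 2 :=
        Finset.sum_congr rfl fun j _ => by rw [hYj j]
      rw [hsum_eq] at hω
      have h36 : Real.sqrt (∑ j, (∑ i, x i * Mf ω i j) ^ 2) ≤ Real.sqrt n / 36 := hω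
      have hn0 : (0:ℝ) ≤ (n:ℝ) := Nat.cast_nonneg n
      nlinarith [Real.sq_sqrt hS0, Real.sq_sqrt hn0, Real.sqrt_nonneg (∑ j, (∑ i, x i * Mf ω i j) ^ 2),
        Real.sqrt_nonneg (n:ℝ)]
    rw [hg, hc0]
    apply ENNReal.ofReal_le_ofReal
    rw [← Real.exp_sum]
    apply Real.exp_le_exp.mpr
    rw [← Finset.sum_div, Finset.sum_neg_distrib]
    linarith
  -- Markov
  have hmar := mul_meas_ge_le_lintegral₀ (μ := P) ((hgmeas.comp hM).aemeasurable) c0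
  have hmono : P {ω | pnorm (Matrix.vecMul x (M ω)) ≤ Real.sqrt n / 36}
      ≤ P {ω | c0 ≤ g (Mf ω)} := measure_mono hsub
  -- compute the integral
  have hlin : ∫⁻ ω, g (Mf ω) ∂P
      = (((Fset n).card : ℝ≥0∞))⁻¹ ^ n
          * ∑ w ∈ Fintype.piFinset (fun _ : Fin n => Fset n), g w := by
    rw [← lintegral_map hgmeas hM, hjoint, hν, pi_uniform, lintegral_smul_measure,
      lintegral_finset_sum_measure]
    congr 1
    exact Finset.sum_congr rfl fun w _ => lintegral_dirac' w hgmeas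
  -- sum bound from the core inequality
  have hsum : ∑ w ∈ Fintype.piFinset (fun _ : Fin n => Fset n), g w
      ≤ ((Fset n).card : ℝ≥0∞) ^ n * ENNReal.ofReal (Real.exp (-(n : ℝ) / 24)) := by
    have h1 : ∑ w ∈ Fintype.piFinset (fun _ : Fin n => Fset n), g w
        = ENNReal.ofReal (∑ w ∈ Fintype.piFinset (fun _ : Fin n => Fset n),
            ∏ j, Real.exp (-(∑ i, x i * w i j) ^ 2 / 6)) := by
      rw [ENNReal.ofReal_sum_of_nonneg]
      intro w _
      positivity
    rw [h1]
    calc ENNReal.ofReal (∑ w ∈ Fintype.piFinset (fun _ : Fin n => Fset n),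
            ∏ j, Real.exp (-(∑ i, x i * w i j) ^ 2 / 6))
        ≤ ENNReal.ofReal (((Fset n).card : ℝ) ^ n * Real.exp (-(n : ℝ) / 24)) :=
          ENNReal.ofReal_le_ofReal (core n hneven x hx2)
      _ = ((Fset n).card : ℝ≥0∞) ^ n * ENNReal.ofReal (Real.exp (-(n : ℝ) / 24)) := by
          rw [ENNReal.ofReal_mul (by positivity), ENNReal.ofReal_pow (by positivity)]
          norm_cast
  -- put it together
  have hcardne : ((Fset n).card : ℝ≥0∞) ^ n ≠ 0 :=
    pow_ne_zero _ (by exact_mod_cast hcard_pos.ne')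
  have hcardnetop : ((Fset n).card : ℝ≥0∞) ^ n ≠ ⊤ :=
    ENNReal.pow_ne_top (ENNReal.natCast_ne_top _)
  have hfinal : c0 * P {ω | pnorm (Matrix.vecMul x (M ω)) ≤ Real.sqrt n / 36}
      ≤ ENNReal.ofReal (Real.exp (-(n : ℝ) / 24)) := by
    calc c0 * P {ω | pnorm (Matrix.vecMul x (M ω)) ≤ Real.sqrt n / 36}
        ≤ c0 * P {ω | c0 ≤ g (Mf ω)} := mul_le_mul_right hmono c0
      _ ≤ ∫⁻ ω, g (Mf ω) ∂P := hmar
      _ = (((Fset n).card : ℝ≥0∞))⁻¹ ^ n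
            * ∑ w ∈ Fintype.piFinset (fun _ : Fin n => Fset n), g w := hlin
      _ ≤ (((Fset n).card : ℝ≥0∞))⁻¹ ^ n
            * (((Fset n).card : ℝ≥0∞) ^ n * ENNReal.ofReal (Real.exp (-(n : ℝ) / 24))) :=
          mul_le_mul_right hsum _
      _ = ENNReal.ofReal (Real.exp (-(n : ℝ) / 24)) := by
          rw [← mul_assoc, ← ENNReal.inv_pow, ENNReal.inv_mul_cancel hcardne hcardnetop, one_mul]
  -- numeric conclusion
  have hnum : ENNReal.ofReal (Real.exp (-(n : ℝ) / 24))
      ≤ c0 * ENNReal.ofReal (Real.exp (-(n : ℝ) / 400)) := by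
    rw [hc0, ← ENNReal.ofReal_mul (by positivity), ← Real.exp_add]
    apply ENNReal.ofReal_le_ofReal
    apply Real.exp_le_exp.mpr
    have : (0:ℝ) ≤ n := Nat.cast_nonneg n
    linarith [this]
  have := le_trans hfinal hnum
  have hc0ne : c0 ≠ 0 := by
    rw [hc0]
    simp [Real.exp_pos]
  have hc0netop : c0 ≠ ⊤ := ENNReal.ofReal_ne_top
  exact (ENNReal.mul_le_mul_iff_right hc0ne hc0netop).mp this

end
end
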